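/- arXiv:2206.09050 — 7 statements merged into one kernel-verified Lean document; each statement's English description precedes it below -/
import Mathlib

section
/- Fix an integer n ≥ 1 and an integer N ≥ n + 1. Let β_1, …, β_N be distinct positive real numbers. Then there exist distinct positive real numbers β̃_1, …, β̃_N such that Σ_{m=1}^{N} β̃_m^{2k+1} = Σ_{m=1}^{N} β_m^{2k+1} for every k = 1, …, n, but (−1)^n Σ_{m=1}^{N} β̃_m^{2n+3} < (−1)^n Σ_{m=1}^{N} β_m^{2n+3}. -/
open Matrix Filter
noncomputable section

open Finset in
lemma aux_sum_split (n N : ℕ) (hN : n + 1 ≤ N) (β : Fin N → ℝ) (z : Fin (n+1) → ℝ) (p : ℕ) :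
    ∑ m : Fin N, (if h : (m : ℕ) < n + 1 then z ⟨m, h⟩ else β m) ^ p
      = (∑ j : Fin (n+1), z j ^ p)
        + ∑ m ∈ Finset.univ.filter (fun m : Fin N => ¬ (m : ℕ) < n + 1), β m ^ p := by
  classical
  rw [← Finset.sum_filter_add_sum_filter_not Finset.univ (fun m : Fin N => (m : ℕ) < n + 1)]
  congr 1
  · have hmap : Finset.univ.filter (fun m : Fin N => (m : ℕ) < n + 1)
        = Finset.map (Fin.castLEEmb hN) Finset.univ := by
      ext m
      simp only [Finset.mem_filter, Finset.mem_univ, true_and, Finset.mem_map,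
        Fin.castLEEmb_apply]
      constructor
      · intro h; exact ⟨⟨m, h⟩, by ext; simp⟩
      · rintro ⟨j, rfl⟩; simp [j.isLt]
    rw [hmap, Finset.sum_map]
    refine Finset.sum_congr rfl fun j _ => ?_
    have h : ((Fin.castLEEmb hN j : Fin N) : ℕ) < n + 1 := by simp [j.isLt]
    rw [dif_pos h]
    congr 1
  · exact Finset.sum_congr rfl fun m hm => by rw [dif_neg (Finset.mem_filter.1 hm).2]

variable (n : ℕ) (a : Fin (n+1) → ℝ)

def Fmap : (Fin (n+1) → ℝ) → (Fin (n+1) → ℝ) := fun x k => ∑ j, x j ^ (2 * (k : ℕ) + 3)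

def Mmat : Matrix (Fin (n+1)) (Fin (n+1)) ℝ :=
  fun k j => ((2 * (k : ℕ) + 3 : ℕ) : ℝ) * a j ^ (2 * (k : ℕ) + 2)

def Lmap : (Fin (n+1) → ℝ) →L[ℝ] (Fin (n+1) → ℝ) :=
  LinearMap.toContinuousLinearMap (Matrix.mulVecLin (Mmat n a))

lemma hasFDerivAt_Fmap : HasFDerivAt (Fmap n) (Lmap n a) a := by
  rw [hasFDerivAt_pi']
  intro k
  have h : ∀ j : Fin (n+1), HasFDerivAt (fun x : Fin (n+1) → ℝ => x j ^ (2 * (k : ℕ) + 3))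
      ((((2 * (k : ℕ) + 3 : ℕ) : ℝ) * a j ^ (2 * (k : ℕ) + 2)) •
        (ContinuousLinearMap.proj j : (Fin (n+1) → ℝ) →L[ℝ] ℝ)) a := by
    intro j
    have := (hasDerivAt_pow (2 * (k : ℕ) + 3) (a j)).comp_hasFDerivAt (𝕜 := ℝ) a
      (hasFDerivAt_apply (𝕜 := ℝ) j a)
    simpa [Function.comp_def] using this
  have hsum := HasFDerivAt.fun_sum (u := Finset.univ) (fun j _ => h j)
  convert hsum using 1
  ext v
  simp [Lmap, Mmat, Fmap, Matrix.mulVec, dotProduct]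
  ext v
  simp [Lmap, Mmat, Fmap, Matrix.mulVec, dotProduct]

lemma det_Mmat_ne_zero (hinj : Function.Injective a) (hpos : ∀ j, 0 < a j) :
    (Mmat n a).det ≠ 0 := by
  classical
  set y : Fin (n+1) → ℝ := fun j => a j ^ 2 with hy
  have hM : Mmat n a
      = Matrix.diagonal (fun k : Fin (n+1) => ((2 * (k : ℕ) + 3 : ℕ) : ℝ))
        * ((Matrix.vandermonde y)ᵀ * Matrix.diagonal y) := by
    ext k j
    rw [Matrix.diagonal_mul, Matrix.mul_diagonal, Matrix.transpose_apply,
      Matrix.vandermonde_apply]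
    show ((2 * (k : ℕ) + 3 : ℕ) : ℝ) * a j ^ (2 * (k : ℕ) + 2)
      = _ * ((a j ^ 2) ^ (k : ℕ) * a j ^ 2)
    rw [← pow_mul, ← pow_add]
  have hyinj : Function.Injective y := by
    intro i j hij
    have h1 : 0 < a i := hpos i
    have h2 : 0 < a j := hpos j
    have hij' : a i ^ 2 = a j ^ 2 := hij
    have : a i = a j := by nlinarith
    exact hinj this
  rw [hM, Matrix.det_mul, Matrix.det_mul, Matrix.det_diagonal, Matrix.det_transpose,
    Matrix.det_diagonal]
  have h1 : (∏ k : Fin (n+1), ((2 * (k : ℕ) + 3 : ℕ) : ℝ)) ≠ 0 :=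
    Finset.prod_ne_zero_iff.2 fun k _ => by positivity
  have h2 : (Matrix.vandermonde y).det ≠ 0 := Matrix.det_vandermonde_ne_zero_iff.2 hyinj
  have h3 : (∏ j : Fin (n+1), y j) ≠ 0 :=
    Finset.prod_ne_zero_iff.2 fun j _ => by simp only [hy]; exact pow_ne_zero 2 (hpos j).ne'
  exact mul_ne_zero h1 (mul_ne_zero h2 h3)

lemma contDiff_Fmap : ContDiff ℝ 1 (Fmap n) :=
  contDiff_pi.2 fun _ => ContDiff.sum fun j _ =>
    ((ContinuousLinearMap.proj j : (Fin (n+1) → ℝ) →L[ℝ] ℝ).contDiff).pow _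

def Eequiv (h : Invertible (Mmat n a)) : (Fin (n+1) → ℝ) ≃L[ℝ] (Fin (n+1) → ℝ) :=
  ((Mmat n a).toLinearEquiv' h).toContinuousLinearEquiv

lemma coe_Eequiv (h : Invertible (Mmat n a)) :
    (Eequiv n a h : (Fin (n+1) → ℝ) →L[ℝ] (Fin (n+1) → ℝ)) = Lmap n a := by
  refine ContinuousLinearMap.ext fun v => ?_
  show ((Mmat n a).toLinearEquiv' h) v = _
  have := Matrix.toLinearEquiv'_apply (Mmat n a) h
  have h2 : ((Mmat n a).toLinearEquiv' h) v = Matrix.toLin' (Mmat n a) v := by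
    rw [← this]; rfl
  rw [h2]
  simp [Lmap, Matrix.toLin'_apply]

lemma hasStrict (h : Invertible (Mmat n a)) :
    HasStrictFDerivAt (Fmap n)
      (Eequiv n a h : (Fin (n+1) → ℝ) →L[ℝ] (Fin (n+1) → ℝ)) a := by
  rw [coe_Eequiv]
  have := ((contDiff_Fmap n).contDiffAt (x := a)).hasStrictFDerivAt one_ne_zero
  rwa [(hasFDerivAt_Fmap n a).fderiv] at this

end

/-- **Decreasing the `(n+1)`st odd power sum while preserving the first `n`.**
Fix `n ≥ 1` and `N ≥ n + 1`.  Given distinct positive reals `β_1, …, β_N`, there exist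
distinct positive reals `β̃_1, …, β̃_N` with the same odd power sums `∑ β_m ^ (2k+1)` for
`k = 1, …, n`, but with `(-1)^n ∑ β̃_m ^ (2n+3) < (-1)^n ∑ β_m ^ (2n+3)`. -/
theorem stmt_2 (n N : ℕ) (hn : 1 ≤ n) (hN : n + 1 ≤ N)
    (β : Fin N → ℝ) (hinj : Function.Injective β) (hpos : ∀ m, 0 < β m) :
    ∃ β' : Fin N → ℝ, Function.Injective β' ∧ (∀ m, 0 < β' m) ∧
      (∀ k : ℕ, 1 ≤ k → k ≤ n →
        ∑ m, β' m ^ (2 * k + 1) = ∑ m, β m ^ (2 * k + 1)) ∧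
      (-1 : ℝ) ^ n * ∑ m, β' m ^ (2 * n + 3) <
        (-1 : ℝ) ^ n * ∑ m, β m ^ (2 * n + 3) := by
  classical
  set a : Fin (n+1) → ℝ := fun j => β (Fin.castLE hN j) with ha
  have hainj : Function.Injective a := fun i j h => Fin.castLE_injective hN (hinj h)
  have hapos : ∀ j, 0 < a j := fun j => hpos _
  have hdet := det_Mmat_ne_zero n a hainj hapos
  have hinvM : Invertible (Mmat n a) := (Mmat n a).invertibleOfIsUnitDet (isUnit_iff_ne_zero.2 hdet)
  have hst := hasStrict n a hinvM
  set g : (Fin (n+1) → ℝ) → (Fin (n+1) → ℝ) :=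
    hst.localInverse (Fmap n) (Eequiv n a hinvM) a with hg
  set w : ℝ → (Fin (n+1) → ℝ) :=
    fun t => Function.update (Fmap n a) (Fin.last n)
      (Fmap n a (Fin.last n) - (-1 : ℝ) ^ n * t) with hwdef
  have hwcont : Continuous w := by
    apply Continuous.update
    · exact continuous_const
    · fun_prop
  have hw0 : w 0 = Fmap n a := by
    simp [hwdef, Function.update_eq_self]
  have hwt : Filter.Tendsto w (nhdsWithin 0 (Set.Ioi (0 : ℝ))) (nhds (Fmap n a)) := by
    have h := hwcont.tendsto 0
    rw [hw0] at h
    exact h.mono_left nhdsWithin_le_nhds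
  have hgt : Filter.Tendsto (fun t => g (w t)) (nhdsWithin 0 (Set.Ioi (0 : ℝ))) (nhds a) := by
    have h1 : ContinuousAt g (Fmap n a) := hst.localInverse_continuousAt
    have h2 := h1.tendsto.comp hwt
    rwa [show g (Fmap n a) = a from hst.localInverse_apply_image] at h2
  have hev1 : ∀ᶠ t in nhdsWithin 0 (Set.Ioi (0 : ℝ)), Fmap n (g (w t)) = w t :=
    hwt.eventually hst.eventually_right_inverse
  have hcoord : ∀ j : Fin (n+1), Filter.Tendsto (fun t => g (w t) j)
      (nhdsWithin 0 (Set.Ioi (0 : ℝ))) (nhds (a j)) :=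
    fun j => ((continuous_apply j).tendsto a).comp hgt
  have hev2 : ∀ᶠ t in nhdsWithin 0 (Set.Ioi (0 : ℝ)), ∀ j, 0 < g (w t) j := by
    rw [Filter.eventually_all]
    exact fun j => (hcoord j).eventually (eventually_gt_nhds (hapos j))
  have hev3 : ∀ᶠ t in nhdsWithin 0 (Set.Ioi (0 : ℝ)),
      ∀ i j : Fin (n+1), i ≠ j → g (w t) i ≠ g (w t) j := by
    rw [Filter.eventually_all]
    intro i
    rw [Filter.eventually_all]
    intro j
    by_cases hij : i = j
    · exact Filter.Eventually.of_forall fun t h => absurd hij h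
    · have hsub : Filter.Tendsto (fun t => g (w t) i - g (w t) j)
          (nhdsWithin 0 (Set.Ioi (0 : ℝ))) (nhds (a i - a j)) := (hcoord i).sub (hcoord j)
      have hne : a i - a j ≠ 0 := sub_ne_zero.2 fun h => hij (hainj h)
      filter_upwards [hsub.eventually_ne hne] with t ht _
      intro hEq
      exact ht (by rw [hEq, sub_self])
  have hev4 : ∀ᶠ t in nhdsWithin 0 (Set.Ioi (0 : ℝ)),
      ∀ (j : Fin (n+1)) (m : Fin N), ¬ ((m : ℕ) < n + 1) → g (w t) j ≠ β m := by
    rw [Filter.eventually_all]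
    intro j
    rw [Filter.eventually_all]
    intro m
    by_cases hm : (m : ℕ) < n + 1
    · exact Filter.Eventually.of_forall fun t h => absurd hm h
    · have hne : a j ≠ β m := by
        intro h
        apply hm
        have := hinj h
        rw [← this]
        simpa using j.isLt
      filter_upwards [(hcoord j).eventually_ne hne] with t ht _
      exact ht
  have hev5 : ∀ᶠ t in nhdsWithin 0 (Set.Ioi (0 : ℝ)), 0 < t :=
    eventually_mem_nhdsWithin
  obtain ⟨t, hF, hpos', hne', hnb, ht0⟩ :=
    (hev1.and (hev2.and (hev3.and (hev4.and hev5)))).exists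
  set x : Fin (n+1) → ℝ := g (w t) with hx
  refine ⟨fun m => if h : (m : ℕ) < n + 1 then x ⟨m, h⟩ else β m, ?_, ?_, ?_, ?_⟩
  · -- injectivity
    intro m₁ m₂ h
    dsimp only at h
    by_cases h₁ : (m₁ : ℕ) < n + 1 <;> by_cases h₂ : (m₂ : ℕ) < n + 1
    · rw [dif_pos h₁, dif_pos h₂] at h
      have : (⟨m₁, h₁⟩ : Fin (n+1)) = ⟨m₂, h₂⟩ := by
        by_contra hc
        exact hne' _ _ hc h
      have := congrArg Fin.val this
      exact Fin.ext this
    · rw [dif_pos h₁, dif_neg h₂] at h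
      exact absurd h (hnb _ m₂ h₂)
    · rw [dif_neg h₁, dif_pos h₂] at h
      exact absurd h.symm (hnb _ m₁ h₁)
    · rw [dif_neg h₁, dif_neg h₂] at h
      exact hinj h
  · -- positivity
    intro m
    dsimp only
    split_ifs with h
    · exact hpos' _
    · exact hpos m
  · -- preserved power sums
    intro k hk1 hkn
    have hbeta : ∀ p : ℕ, ∑ m : Fin N, β m ^ p
        = (∑ j : Fin (n+1), a j ^ p)
          + ∑ m ∈ Finset.univ.filter (fun m : Fin N => ¬ (m : ℕ) < n + 1), β m ^ p := by
      intro p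
      have heq : (fun m : Fin N => if h : (m : ℕ) < n + 1 then a ⟨m, h⟩ else β m) = β := by
        funext m
        split_ifs with h
        · show β _ = β m
          congr 1
        · rfl
      conv_lhs => rw [← heq]
      exact aux_sum_split n N hN β a p
    have kk : Fin (n+1) := ⟨k - 1, by omega⟩
    have hkklast : (⟨k - 1, by omega⟩ : Fin (n+1)) ≠ Fin.last n := by
      intro hc
      have := congrArg Fin.val hc
      simp at this
      omega
    have hcomp : Fmap n x ⟨k - 1, by omega⟩ = Fmap n a ⟨k - 1, by omega⟩ := by
      rw [congrFun hF ⟨k - 1, by omega⟩]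
      exact Function.update_of_ne hkklast _ _
    have he : 2 * ((⟨k - 1, by omega⟩ : Fin (n+1)) : ℕ) + 3 = 2 * k + 1 := by
      simp only []
      omega
    have h3 : (∑ j : Fin (n+1), x j ^ (2 * k + 1)) = ∑ j : Fin (n+1), a j ^ (2 * k + 1) := by
      have := hcomp
      simp only [Fmap, he] at this
      exact this
    rw [aux_sum_split n N hN β x (2 * k + 1), hbeta (2 * k + 1), h3]
  · -- strict decrease
    have hbeta : ∀ p : ℕ, ∑ m : Fin N, β m ^ p
        = (∑ j : Fin (n+1), a j ^ p)
          + ∑ m ∈ Finset.univ.filter (fun m : Fin N => ¬ (m : ℕ) < n + 1), β m ^ p := by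
      intro p
      have heq : (fun m : Fin N => if h : (m : ℕ) < n + 1 then a ⟨m, h⟩ else β m) = β := by
        funext m
        split_ifs with h
        · show β _ = β m
          congr 1
        · rfl
      conv_lhs => rw [← heq]
      exact aux_sum_split n N hN β a p
    have hcomp : Fmap n x (Fin.last n) = Fmap n a (Fin.last n) - (-1 : ℝ) ^ n * t := by
      rw [congrFun hF (Fin.last n)]
      exact Function.update_self _ _ _
    have he : 2 * ((Fin.last n : Fin (n+1)) : ℕ) + 3 = 2 * n + 3 := by
      simp [Fin.val_last]
    have h4 : (∑ j : Fin (n+1), x j ^ (2 * n + 3))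
        = (∑ j : Fin (n+1), a j ^ (2 * n + 3)) - (-1 : ℝ) ^ n * t := by
      have := hcomp
      simp only [Fmap, he] at this
      exact this
    rw [aux_sum_split n N hN β x (2 * n + 3), hbeta (2 * n + 3), h4]
    have hsq : (-1 : ℝ) ^ n * (-1 : ℝ) ^ n = 1 := by
      rw [← mul_pow]; norm_num
    nlinarith [ht0, hsq]
end

section
/- Fix an integer n ≥ 1. Let S ⊂ ℝ^n denote the half-open simplex of all β = (β_1, …, β_n) for which there exists an integer N with 0 ≤ N ≤ n such that β_1 > β_2 > ⋯ > β_N > 0 and β_{N+1} = ⋯ = β_n = 0. Define Φ : S → ℝ^n by Φ(β)_m = (−1)^{m+1} (2^{2m+1}/(2m+1)) Σ_{j=1}^{n} β_j^{2m+1} for m = 1, …, n. Then Φ is a homeomorphism from S (with the subspace topology from ℝ^n) onto its image Φ(S) (with the subspace topology from ℝ^n). -/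
namespace Stmt3Aux


/-- indicator of `u ≤ c` -/
noncomputable def chi (c u : ℝ) : ℝ := if u ≤ c then 1 else 0

lemma chi_nonneg (c u : ℝ) : 0 ≤ chi c u := by unfold chi; split <;> norm_num

lemma chi_le_one (c u : ℝ) : chi c u ≤ 1 := by unfold chi; split <;> norm_num

/-- total variation of the path `prev :: l` -/
noncomputable def tvl : ℝ → List ℝ → ℝ
  | _, [] => 0
  | prev, d :: rest => |d - prev| + tvl d rest

lemma tvl_nonneg (prev : ℝ) (l : List ℝ) : 0 ≤ tvl prev l := by
  induction l generalizing prev with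
  | nil => simp [tvl]
  | cons d rest ih => simpa [tvl] using add_nonneg (abs_nonneg _) (ih d)

lemma tvl_map_add (p q : ℝ → ℝ) :
    ∀ (l : List ℝ) (a : ℝ),
      tvl (p a + q a) (l.map fun u => p u + q u)
        ≤ tvl (p a) (l.map p) + tvl (q a) (l.map q) := by
  intro l
  induction l with
  | nil => intro a; simp [tvl]
  | cons u rest ih =>
    intro a
    simp only [List.map_cons, tvl]
    have h1 : |p u + q u - (p a + q a)| ≤ |p u - p a| + |q u - q a| := by
      have : p u + q u - (p a + q a) = (p u - p a) + (q u - q a) := by ring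
      rw [this]; exact abs_add_le _ _
    have := ih u
    linarith

lemma tvl_map_zero : ∀ (l : List ℝ), tvl 0 (l.map fun _ => (0 : ℝ)) = 0 := by
  intro l
  induction l with
  | nil => simp [tvl]
  | cons u rest ih =>
    rw [List.map_cons]
    simpa [tvl] using ih

lemma tvl_map_sum {ι : Type*} (s : Finset ι) (f : ι → ℝ → ℝ) (a : ℝ) (l : List ℝ) :
    tvl (∑ i ∈ s, f i a) (l.map fun u => ∑ i ∈ s, f i u)
      ≤ ∑ i ∈ s, tvl (f i a) (l.map (f i)) := by
  induction s using Finset.cons_induction with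
  | empty =>
    have hrep : ∀ k : ℕ, tvl 0 (List.replicate k (0:ℝ)) = 0 := by
      intro k; induction k with
      | zero => simp [tvl]
      | succ m ih => simp [List.replicate_succ, tvl, ih]
    simp [hrep]
  | cons j s hj ih =>
    simp only [Finset.sum_cons]
    calc tvl (f j a + ∑ i ∈ s, f i a) (l.map fun u => f j u + ∑ i ∈ s, f i u)
        ≤ tvl (f j a) (l.map (f j)) + tvl (∑ i ∈ s, f i a) (l.map fun u => ∑ i ∈ s, f i u) :=
          tvl_map_add (f j) (fun u => ∑ i ∈ s, f i u) l a
      _ ≤ _ := by linarith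

lemma tvl_map_neg (p : ℝ → ℝ) : ∀ (l : List ℝ) (a : ℝ),
    tvl (-(p a)) (l.map fun u => -(p u)) = tvl (p a) (l.map p) := by
  intro l
  induction l with
  | nil => intro a; simp [tvl]
  | cons u rest ih =>
    intro a
    simp only [List.map_cons, tvl, ih u]
    congr 1
    rw [show -p u - -p a = -(p u - p a) by ring, abs_neg]

lemma tvl_map_chi (c : ℝ) : ∀ (l : List ℝ) (a : ℝ), (∀ u ∈ l, u < a) →
    List.Pairwise (· > ·) l → tvl (chi c a) (l.map (chi c)) ≤ 1 - chi c a := by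
  intro l
  induction l with
  | nil => intro a _ _; simpa [tvl] using chi_le_one c a
  | cons u rest ih =>
    intro a ha hp
    have hua : u < a := ha u (by simp)
    have hmono : chi c a ≤ chi c u := by
      unfold chi
      by_cases h1 : a ≤ c
      · rw [if_pos h1, if_pos (le_trans hua.le h1)]
      · rw [if_neg h1]; exact chi_nonneg c u |>.trans_eq (by unfold chi; rfl) |>.trans_eq rfl
    simp only [List.map_cons, tvl]
    have h2 : |chi c u - chi c a| = chi c u - chi c a := abs_of_nonneg (by linarith)
    have h3 := ih u (fun v hv => (List.pairwise_cons.1 hp).1 v hv) (List.pairwise_cons.1 hp).2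
    linarith [h3, h2.le, h2.ge]



/-- the list of sign-flip locations of `F` along `l` (processed in decreasing order),
threaded with the current sign `cur`. -/
noncomputable def zs (F : ℝ → ℝ) : ℝ → List ℝ → List ℝ
  | _, [] => []
  | cur, u :: rest => if 0 ≤ F u * cur then zs F cur rest else u :: zs F (-cur) rest

/-- sign of the first nonvanishing value of `F` along `l` -/
noncomputable def fsign (F : ℝ → ℝ) : List ℝ → ℝ
  | [] => 1
  | u :: rest => if F u = 0 then fsign F rest else if 0 < F u then 1 else -1

lemma fsign_eq (F : ℝ → ℝ) : ∀ l : List ℝ, fsign F l = 1 ∨ fsign F l = -1 := by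
  intro l
  induction l with
  | nil => left; rfl
  | cons u rest ih =>
    unfold fsign
    by_cases h : F u = 0
    · simpa [h] using ih
    · rw [if_neg h]; by_cases h2 : 0 < F u <;> simp [h2]

lemma zs_subset (F : ℝ → ℝ) : ∀ (l : List ℝ) (cur : ℝ), ∀ z ∈ zs F cur l, z ∈ l := by
  intro l
  induction l with
  | nil => intro cur z hz; simp [zs] at hz
  | cons u rest ih =>
    intro cur z hz
    unfold zs at hz
    by_cases h : 0 ≤ F u * cur
    · rw [if_pos h] at hz; exact List.mem_cons_of_mem u (ih cur z hz)
    · rw [if_neg h] at hz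
      rcases List.mem_cons.1 hz with h1 | h1
      · simp [h1]
      · exact List.mem_cons_of_mem u (ih (-cur) z h1)


lemma tvl_map_add' (p q S : ℝ → ℝ) (hS : ∀ u, S u = p u + q u) (l : List ℝ) (a : ℝ) :
    tvl (S a) (l.map S) ≤ tvl (p a) (l.map p) + tvl (q a) (l.map q) := by
  have hfe : S = fun u => p u + q u := funext hS
  rw [hfe]
  exact tvl_map_add p q l a

lemma tvl_map_sum' {ι : Type*} (s : Finset ι) (f : ι → ℝ → ℝ) (S : ℝ → ℝ)
    (hS : ∀ u, S u = ∑ i ∈ s, f i u) (a : ℝ) (l : List ℝ) :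
    tvl (S a) (l.map S) ≤ ∑ i ∈ s, tvl (f i a) (l.map (f i)) := by
  have hfe : S = fun u => ∑ i ∈ s, f i u := funext hS
  rw [hfe]
  exact tvl_map_sum s f a l

lemma one_le_nonneg_abs {x : ℝ} (hx : 0 ≤ x) (h : 1 ≤ |x|) : 1 ≤ x := by
  rwa [abs_of_nonneg hx] at h

/-- key total-variation bound on the number of sign flips -/
lemma tvl_flip_bound (F : ℝ → ℝ) :
    ∀ (l : List ℝ), (∀ u ∈ l, F u = 0 ∨ 1 ≤ |F u|) → ∀ cur : ℝ, |cur| = 1 →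
      ((∀ prev : ℝ, 1 ≤ prev * cur → 2 * ((zs F cur l).length : ℝ) ≤ tvl prev (l.map F)) ∧
        2 * ((zs F cur l).length : ℝ) ≤ tvl 0 (l.map F) + 1) := by
  intro l
  induction l with
  | nil =>
    intro _ cur _
    constructor
    · intro prev _; simp [zs, tvl]
    · simp [zs, tvl]
  | cons u rest ih =>
    intro hint cur hcur
    have hint' : ∀ v ∈ rest, F v = 0 ∨ 1 ≤ |F v| := fun v hv => hint v (List.mem_cons_of_mem u hv)
    have hd := hint u (by simp)
    constructor
    · intro prev hprev
      by_cases hflip : 0 ≤ F u * cur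
      · -- no flip
        rw [show zs F cur (u :: rest) = zs F cur rest by simp [zs, hflip]]
        simp only [List.map_cons, tvl]
        by_cases hd0 : F u = 0
        · -- use part 2 of ih
          have h2 := (ih hint' cur hcur).2
          have hprev1 : 1 ≤ |prev| := by
            calc (1:ℝ) ≤ prev * cur := hprev
            _ ≤ |prev * cur| := le_abs_self _
            _ = |prev| := by rw [abs_mul, hcur, mul_one]
          rw [hd0, zero_sub, abs_neg]
          linarith
        · -- F u ≠ 0, use part 1 of ih with prev := F u
          have h1 : 1 ≤ F u * cur := by
            rcases hd with h | h
            · exact absurd h hd0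
            · exact one_le_nonneg_abs hflip (by rw [abs_mul, hcur, mul_one]; exact h)
          have := (ih hint' cur hcur).1 (F u) h1
          have habs : (0:ℝ) ≤ |F u - prev| := abs_nonneg _
          linarith
      · -- flip
        push_neg at hflip
        rw [show zs F cur (u :: rest) = u :: zs F (-cur) rest by simp [zs, not_le.2 hflip]]
        simp only [List.map_cons, tvl, List.length_cons]
        have hcur' : |(-cur)| = 1 := by rwa [abs_neg]
        have hd0 : F u ≠ 0 := by
          intro h; rw [h] at hflip; simp at hflip
        have h1 : 1 ≤ F u * (-cur) := by
          refine one_le_nonneg_abs (by nlinarith) ?_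
          rcases hd with h | h
          · exact absurd h hd0
          · rw [abs_mul, hcur', mul_one]; exact h
        have := (ih hint' (-cur) hcur').1 (F u) h1
        have h2 : 2 ≤ |F u - prev| := by
          have he : |F u - prev| = |(F u - prev) * cur| := by rw [abs_mul, hcur, mul_one]
          rw [he, show (F u - prev) * cur = F u * cur - prev * cur by ring]
          have hfu : F u * cur ≤ -1 := by nlinarith
          calc (2:ℝ) ≤ prev * cur - F u * cur := by linarith
          _ ≤ |F u * cur - prev * cur| := by rw [abs_sub_comm]; exact le_abs_self _
        push_cast
        linarith
    · -- part 2 : prev = 0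
      by_cases hd0 : F u = 0
      · rw [show zs F cur (u :: rest) = zs F cur rest by simp [zs, hd0]]
        simp only [List.map_cons, tvl]
        rw [hd0]
        have h2 := (ih hint' cur hcur).2
        simp only [sub_zero, abs_zero, zero_sub, abs_neg, neg_zero]
        linarith
      · by_cases hflip : 0 ≤ F u * cur
        · rw [show zs F cur (u :: rest) = zs F cur rest by simp [zs, hflip]]
          simp only [List.map_cons, tvl]
          have h1 : 1 ≤ F u * cur := by
            rcases hd with h | h
            · exact absurd h hd0
            · exact one_le_nonneg_abs hflip (by rw [abs_mul, hcur, mul_one]; exact h)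
          have h3 := (ih hint' cur hcur).1 (F u) h1
          have h4 : (0:ℝ) ≤ |F u - 0| := abs_nonneg _
          linarith
        · push_neg at hflip
          rw [show zs F cur (u :: rest) = u :: zs F (-cur) rest by simp [zs, not_le.2 hflip]]
          simp only [List.map_cons, tvl, List.length_cons]
          have hcur' : |(-cur)| = 1 := by rwa [abs_neg]
          have hd1 : 1 ≤ |F u| := by
            rcases hd with h | h
            · exact absurd h hd0
            · exact h
          have h1 : 1 ≤ F u * (-cur) := by
            refine one_le_nonneg_abs (by nlinarith) ?_
            rw [abs_mul, hcur', mul_one]; exact hd1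
          have := (ih hint' (-cur) hcur').1 (F u) h1
          have h2 : 1 ≤ |F u - 0| := by simpa using hd1
          push_cast
          linarith

lemma tvl_fsign_bound (F : ℝ → ℝ) :
    ∀ l : List ℝ, (∀ u ∈ l, F u = 0 ∨ 1 ≤ |F u|) → (∃ u ∈ l, F u ≠ 0) →
      2 * ((zs F (fsign F l) l).length : ℝ) + 1 ≤ tvl 0 (l.map F) := by
  intro l
  induction l with
  | nil => rintro _ ⟨u, hu, _⟩; simp at hu
  | cons u rest ih =>
    intro hint hex
    have hint' : ∀ v ∈ rest, F v = 0 ∨ 1 ≤ |F v| := fun v hv => hint v (List.mem_cons_of_mem u hv)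
    by_cases hd0 : F u = 0
    · have hfs : fsign F (u :: rest) = fsign F rest := by simp [fsign, hd0]
      have hex' : ∃ v ∈ rest, F v ≠ 0 := by
        rcases hex with ⟨v, hv, hvne⟩
        rcases List.mem_cons.1 hv with rfl | hv'
        · exact absurd hd0 hvne
        · exact ⟨v, hv', hvne⟩
      have hzs : zs F (fsign F (u :: rest)) (u :: rest) = zs F (fsign F rest) rest := by
        rw [hfs]; simp [zs, hd0]
      rw [hzs]
      simp only [List.map_cons, tvl]
      rw [hd0]
      simpa using ih hint' hex'
    · set cur := fsign F (u :: rest) with hcurdef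
      have hcur : |cur| = 1 := by
        rcases fsign_eq F (u :: rest) with h | h <;> rw [← hcurdef] at h <;> simp [h]
      have hd1 : 1 ≤ |F u| := by
        rcases hint u (by simp) with h | h
        · exact absurd h hd0
        · exact h
      have hcurval : 1 ≤ F u * cur := by
        refine one_le_nonneg_abs ?_ (by rw [abs_mul, hcur, mul_one]; exact hd1)
        have : cur = if 0 < F u then 1 else -1 := by rw [hcurdef]; simp [fsign, hd0]
        rw [this]
        by_cases h : 0 < F u
        · simp [h]; linarith
        · simp [h]; nlinarith [lt_of_le_of_ne (not_lt.1 h) hd0]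
      have hzs : zs F cur (u :: rest) = zs F cur rest := by
        simp [zs, le_of_lt (lt_of_lt_of_le zero_lt_one hcurval)]
      rw [hzs]
      simp only [List.map_cons, tvl]
      have h1 := (tvl_flip_bound F rest hint' cur hcur).1 (F u) hcurval
      have h2 : 1 ≤ |F u - 0| := by simpa using hd1
      linarith



/-- Abel-type sum `∑ F(u_j) (Q(u_j) - Q(u_{j+1}))` along a decreasing list. -/
noncomputable def asum (Q F : ℝ → ℝ) : List ℝ → ℝ
  | [] => 0
  | u :: rest => F u * (Q u - Q (rest.headD 0)) + asum Q F rest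

lemma asum_add (Q p q : ℝ → ℝ) : ∀ l : List ℝ,
    asum Q (fun u => p u + q u) l = asum Q p l + asum Q q l := by
  intro l
  induction l with
  | nil => simp [asum]
  | cons u rest ih => simp only [asum, ih]; ring

lemma asum_neg (Q p : ℝ → ℝ) : ∀ l : List ℝ,
    asum Q (fun u => -(p u)) l = -asum Q p l := by
  intro l
  induction l with
  | nil => simp [asum]
  | cons u rest ih => simp only [asum, ih]; ring

lemma asum_zero (Q : ℝ → ℝ) : ∀ l : List ℝ, asum Q (fun _ => 0) l = 0 := by
  intro l
  induction l with
  | nil => simp [asum]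
  | cons u rest ih => simp only [asum, ih]; ring

lemma asum_sum (Q : ℝ → ℝ) {ι : Type*} (s : Finset ι) (f : ι → ℝ → ℝ) (l : List ℝ) :
    asum Q (fun u => ∑ i ∈ s, f i u) l = ∑ i ∈ s, asum Q (f i) l := by
  induction s using Finset.cons_induction with
  | empty => simpa using asum_zero Q l
  | cons j s hj ih =>
    simp only [Finset.sum_cons, ← ih]
    rw [show (fun u => f j u + ∑ i ∈ s, f i u) = fun u => f j u + (fun v => ∑ i ∈ s, f i v) u from rfl,
      asum_add]

lemma asum_const_one (Q W : ℝ → ℝ) (hQ0 : Q 0 = 0) :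
    ∀ l : List ℝ, (∀ u ∈ l, W u = 1) → asum Q W l = Q (l.headD 0) := by
  intro l
  induction l with
  | nil => simp [asum, hQ0]
  | cons u rest ih =>
    intro hone
    simp only [asum, List.headD_cons]
    rw [hone u (by simp), ih (fun v hv => hone v (List.mem_cons_of_mem u hv))]
    ring

lemma asum_chi (Q : ℝ → ℝ) (hQ0 : Q 0 = 0) (c : ℝ) (hc : 0 ≤ c) :
    ∀ l : List ℝ, List.Pairwise (· > ·) l → (∀ u ∈ l, 0 < u) → (0 < c → c ∈ l) →
      asum Q (chi c) l = Q c := by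
  have asum_vanish : ∀ (G : ℝ → ℝ) (l : List ℝ), (∀ u ∈ l, G u = 0) → asum Q G l = 0 := by
    intro G l
    induction l with
    | nil => intro _; simp [asum]
    | cons u rest ih =>
      intro hz
      simp only [asum]
      rw [hz u (by simp), ih (fun v hv => hz v (List.mem_cons_of_mem u hv))]
      ring
  rcases eq_or_lt_of_le hc with rfl | hcpos
  · -- c = 0 : all chi vanish on positive entries
    intro l _ hpos _
    rw [asum_vanish (chi 0) l (fun u hu => by unfold chi; rw [if_neg (not_le.2 (hpos u hu))]), hQ0]
  · intro l
    induction l with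
    | nil =>
      intro _ _ hmem
      exact absurd (hmem hcpos) (by simp)
    | cons u rest ih =>
      intro hpair hpos hmem
      rcases List.mem_cons.1 (hmem hcpos) with rfl | hcrest
      · -- c = u : head term Q u - Q b plus full telescope of rest
        have hone : ∀ v ∈ rest, chi c v = 1 := by
          intro v hv
          unfold chi
          rw [if_pos (le_of_lt ((List.pairwise_cons.1 hpair).1 v hv))]
        have hchic : chi c c = 1 := by unfold chi; rw [if_pos le_rfl]
        simp only [asum]
        rw [hchic, asum_const_one Q (chi c) hQ0 rest hone]
        ring
      · have hcu : c < u := (List.pairwise_cons.1 hpair).1 c hcrest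
        have hchiu : chi c u = 0 := by unfold chi; rw [if_neg (not_le.2 hcu)]
        simp only [asum]
        rw [hchiu, ih (List.pairwise_cons.1 hpair).2
          (fun v hv => hpos v (List.mem_cons_of_mem u hv)) (fun _ => hcrest)]
        ring



lemma headD_facts {u : ℝ} {rest : List ℝ} (hp : List.Pairwise (· > ·) (u :: rest))
    (hpos : ∀ v ∈ u :: rest, 0 < v) :
    0 ≤ rest.headD 0 ∧ rest.headD 0 < u ∧ ∀ z ∈ rest, z ≤ rest.headD 0 := by
  cases rest with
  | nil => refine ⟨le_rfl, hpos u (by simp), by simp⟩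
  | cons b tail =>
    refine ⟨(hpos b (by simp)).le, (List.pairwise_cons.1 hp).1 b (by simp), ?_⟩
    intro z hz
    rcases List.mem_cons.1 hz with rfl | hz'
    · simp
    · exact le_of_lt ((List.pairwise_cons.1 (List.pairwise_cons.1 hp).2).1 z hz')

/-- The key positivity lemma: with roots placed at the sign flips of `F`,
the Abel sum of the antiderivative `Q` is positive. -/
lemma main_pos (F : ℝ → ℝ) :
    ∀ l : List ℝ, List.Pairwise (· > ·) l → (∀ u ∈ l, 0 < u) →
    ∀ cur : ℝ, (cur = 1 ∨ cur = -1) →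
    ∀ B : ℝ, (∀ u ∈ l, u < B) →
    ∀ G : ℝ → ℝ, (∀ t, 0 < t → t < B → 0 < G t) →
    ∀ Q : ℝ → ℝ, Continuous Q →
    (∀ t, 0 < t → t < B →
      HasDerivAt Q (cur * t ^ 2 * G t * ((zs F cur l).map fun z => t ^ 2 - z ^ 2).prod) t) →
    0 ≤ asum Q F l ∧ ((∃ u ∈ l, F u ≠ 0) → 0 < asum Q F l) := by
  intro l
  induction l with
  | nil =>
    intro _ _ cur _ B _ G _ Q _ _
    constructor
    · simp [asum]
    · rintro ⟨u, hu, _⟩; simp at hu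
  | cons u rest ih =>
    intro hpair hpos cur hcur B hB G hG Q hQc hQd
    obtain ⟨hb0, hbu, hrestb⟩ := headD_facts hpair hpos
    set b := rest.headD 0 with hbdef
    have hpos' : ∀ v ∈ rest, 0 < v := fun v hv => hpos v (List.mem_cons_of_mem u hv)
    have hpair' : List.Pairwise (· > ·) rest := (List.pairwise_cons.1 hpair).2
    have huB : u < B := hB u (by simp)
    have hu0 : 0 < u := hpos u (by simp)
    -- a generic monotonicity tool
    have mono_tool : ∀ (d : ℝ), d ≠ 0 →
        (∀ t, b < t → t < u → 0 < d * (cur * t ^ 2 * G t *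
          ((zs F cur (u :: rest)).map fun z => t ^ 2 - z ^ 2).prod)) →
        0 < d * (Q u - Q b) := by
      intro d hd hsign
      have hmono : StrictMonoOn (fun t => d * Q t) (Set.Icc b u) := by
        apply strictMonoOn_of_deriv_pos (convex_Icc b u)
        · exact (continuous_const.mul hQc).continuousOn
        · intro t ht
          rw [interior_Icc] at ht
          have ht0 : 0 < t := lt_of_le_of_lt hb0 ht.1
          have htB : t < B := lt_trans ht.2 huB
          have hder : HasDerivAt (fun t => d * Q t)
              (d * (cur * t ^ 2 * G t * ((zs F cur (u :: rest)).map fun z => t ^ 2 - z ^ 2).prod)) t :=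
            (hQd t ht0 htB).const_mul d
          rw [hder.deriv]
          exact hsign t ht.1 ht.2
      have := hmono (Set.left_mem_Icc.2 (le_of_lt hbu)) (Set.right_mem_Icc.2 (le_of_lt hbu)) hbu
      simpa [mul_sub] using this
    by_cases hflip : 0 ≤ F u * cur
    · -- no flip
      have hzs : zs F cur (u :: rest) = zs F cur rest := by simp [zs, hflip]
      have hroots : ∀ z ∈ zs F cur rest, 0 < z ∧ z ≤ b := by
        intro z hz
        have hzmem := zs_subset F rest cur z hz
        exact ⟨hpos' z hzmem, hrestb z hzmem⟩
      -- head term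
      have hterm : 0 ≤ F u * (Q u - Q b) ∧ (F u ≠ 0 → 0 < F u * (Q u - Q b)) := by
        by_cases hd : F u = 0
        · rw [hd]; simp
        · have hcur2 : F u * cur > 0 := by
            rcases lt_or_eq_of_le hflip with h | h
            · exact h
            · exfalso
              rcases hcur with rfl | rfl
              · rw [mul_one] at h; exact hd h.symm
              · apply hd; have := h.symm; nlinarith
          have := mono_tool (F u) hd ?_
          · exact ⟨this.le, fun _ => this⟩
          · intro t htb htu
            have ht0 : 0 < t := lt_of_le_of_lt hb0 htb
            have htB : t < B := lt_trans htu huB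
            rw [hzs]
            have hprod : 0 < ((zs F cur rest).map fun z => t ^ 2 - z ^ 2).prod := by
              apply List.prod_pos
              intro x hx
              rcases List.mem_map.1 hx with ⟨z, hz, rfl⟩
              obtain ⟨hz0, hzb⟩ := hroots z hz
              have : z < t := lt_of_le_of_lt hzb htb
              nlinarith
            have hGt := hG t ht0 htB
            rw [show F u * (cur * t ^ 2 * G t * ((zs F cur rest).map fun z => t ^ 2 - z ^ 2).prod)
              = (F u * cur) * (t ^ 2 * G t * ((zs F cur rest).map fun z => t ^ 2 - z ^ 2).prod) by ring]
            have ht2 : (0:ℝ) < t ^ 2 := by positivity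
            positivity
      -- tail
      have htail := ih hpair' hpos' cur hcur B (fun v hv => hB v (List.mem_cons_of_mem u hv)) G hG Q hQc
        (by intro t ht0 htB; rw [← hzs]; exact hQd t ht0 htB)
      constructor
      · simp only [asum, ← hbdef]
        exact add_nonneg hterm.1 htail.1
      · rintro ⟨v, hv, hvne⟩
        simp only [asum, ← hbdef]
        rcases List.mem_cons.1 hv with rfl | hv'
        · have := hterm.2 hvne
          linarith [htail.1]
        · have := htail.2 ⟨v, hv', hvne⟩
          linarith [hterm.1]
    · -- flip
      push_neg at hflip
      have hzs : zs F cur (u :: rest) = u :: zs F (-cur) rest := by simp [zs, not_le.2 hflip]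
      have hd : F u ≠ 0 := by intro h; rw [h] at hflip; simp at hflip
      have hcur' : -cur = 1 ∨ -cur = -1 := by
        rcases hcur with rfl | rfl
        · right; norm_num
        · left; norm_num
      have hroots : ∀ z ∈ zs F (-cur) rest, 0 < z ∧ z ≤ b := by
        intro z hz
        have hzmem := zs_subset F rest (-cur) z hz
        exact ⟨hpos' z hzmem, hrestb z hzmem⟩
      -- tail with new exterior factor
      have htail := ih hpair' hpos' (-cur) hcur' u (fun v hv => (List.pairwise_cons.1 hpair).1 v hv)
        (fun t => G t * (u ^ 2 - t ^ 2))
        (by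
          intro t ht0 htu
          have h1 : 0 < G t := hG t ht0 (lt_trans htu huB)
          have h2 : 0 < u ^ 2 - t ^ 2 := by nlinarith
          exact mul_pos h1 h2)
        Q hQc
        (by
          intro t ht0 htu
          have := hQd t ht0 (lt_trans htu huB)
          rw [hzs] at this
          convert this using 1
          simp only [List.map_cons, List.prod_cons]
          ring)
      -- head term
      have hterm : 0 < F u * (Q u - Q b) := by
        apply mono_tool (F u) hd
        intro t htb htu
        have ht0 : 0 < t := lt_of_le_of_lt hb0 htb
        have htB : t < B := lt_trans htu huB
        rw [hzs]
        simp only [List.map_cons, List.prod_cons]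
        have hprod : 0 < ((zs F (-cur) rest).map fun z => t ^ 2 - z ^ 2).prod := by
          apply List.prod_pos
          intro x hx
          rcases List.mem_map.1 hx with ⟨z, hz, rfl⟩
          obtain ⟨hz0, hzb⟩ := hroots z hz
          have : z < t := lt_of_le_of_lt hzb htb
          nlinarith
        have hGt := hG t ht0 htB
        have hneg : t ^ 2 - u ^ 2 < 0 := by nlinarith
        have ht2 : (0:ℝ) < t ^ 2 := by positivity
        rw [show F u * (cur * t ^ 2 * G t * ((t ^ 2 - u ^ 2) *
            ((zs F (-cur) rest).map fun z => t ^ 2 - z ^ 2).prod))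
          = ((F u * cur) * (t ^ 2 - u ^ 2)) * (t ^ 2 * G t *
            ((zs F (-cur) rest).map fun z => t ^ 2 - z ^ 2).prod) by ring]
        have h1 : 0 < (F u * cur) * (t ^ 2 - u ^ 2) := mul_pos_of_neg_of_neg hflip hneg
        positivity
      constructor
      · simp only [asum, ← hbdef]
        linarith [htail.1]
      · intro _
        simp only [asum, ← hbdef]
        linarith [htail.1]


lemma headD_ge {l : List ℝ} (hp : List.Pairwise (· > ·) l) : ∀ u ∈ l, u ≤ l.headD 0 := by
  cases l with
  | nil => simp
  | cons a rest =>
    intro u hu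
    rcases List.mem_cons.1 hu with rfl | hu'
    · simp
    · simpa using le_of_lt ((List.pairwise_cons.1 hp).1 u hu')

lemma chi_card {n : ℕ} (w : Fin n → ℝ) (u : ℝ) :
    (∑ i, chi (w i) u) = ((Finset.univ.filter fun l => u ≤ w l).card : ℝ) := by
  unfold chi
  rw [Finset.sum_boole]

/-- **Core injectivity**: odd power sums of orders `3, 5, …, 2n+1` separate
nonincreasing nonnegative `n`-vectors. -/
lemma core_inj (n : ℕ) (x y : Fin n → ℝ)
    (hx : ∀ i j : Fin n, i ≤ j → x j ≤ x i) (hx0 : ∀ i, 0 ≤ x i)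
    (hy : ∀ i j : Fin n, i ≤ j → y j ≤ y i) (hy0 : ∀ i, 0 ≤ y i)
    (hsum : ∀ m : ℕ, m < n → ∑ i, x i ^ (2 * m + 3) = ∑ i, y i ^ (2 * m + 3)) :
    x = y := by
  by_contra hne
  -- the grid of positive values
  set V : Finset ℝ :=
    ((Finset.image x Finset.univ ∪ Finset.image y Finset.univ).filter fun v => 0 < v) with hV
  set us : List ℝ := (V.sort (· ≤ ·)).reverse with hus
  have husmem : ∀ v : ℝ, v ∈ us ↔ v ∈ V := by
    intro v; rw [hus, List.mem_reverse, Finset.mem_sort]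
  have huspos : ∀ v ∈ us, 0 < v := by
    intro v hv
    have := (husmem v).1 hv
    rw [hV] at this
    exact (Finset.mem_filter.1 this).2
  have huspair : List.Pairwise (· > ·) us := by
    rw [hus, List.pairwise_reverse]
    exact V.sortedLT_sort.pairwise
  have hmemx : ∀ i : Fin n, 0 < x i → x i ∈ us := by
    intro i hi
    rw [husmem, hV]
    exact Finset.mem_filter.2
      ⟨Finset.mem_union_left _ (Finset.mem_image_of_mem x (Finset.mem_univ i)), hi⟩
  have hmemy : ∀ i : Fin n, 0 < y i → y i ∈ us := by
    intro i hi
    rw [husmem, hV]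
    exact Finset.mem_filter.2
      ⟨Finset.mem_union_right _ (Finset.mem_image_of_mem y (Finset.mem_univ i)), hi⟩
  -- the jump function
  set F : ℝ → ℝ := fun u => (∑ i, chi (x i) u) - ∑ i, chi (y i) u with hF
  have hFcard : ∀ u : ℝ, F u = ((Finset.univ.filter fun l => u ≤ x l).card : ℝ) -
      ((Finset.univ.filter fun l => u ≤ y l).card : ℝ) := by
    intro u
    show (∑ i, chi (x i) u) - (∑ i, chi (y i) u) = _
    rw [chi_card x u, chi_card y u]
  -- integrality
  have hint : ∀ u ∈ us, F u = 0 ∨ 1 ≤ |F u| := by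
    intro u _
    rw [hFcard u]
    set a := (Finset.univ.filter fun l => u ≤ x l).card
    set b := (Finset.univ.filter fun l => u ≤ y l).card
    rcases eq_or_ne a b with h | h
    · left; rw [h]; ring
    · right
      have hcast : ((a:ℝ) - b) = (((a:ℤ) - (b:ℤ) : ℤ) : ℝ) := by push_cast; ring
      rw [hcast, ← Int.cast_abs]
      have : 1 ≤ |(a:ℤ) - (b:ℤ)| := Int.one_le_abs (sub_ne_zero.2 (by exact_mod_cast h))
      exact_mod_cast this
  -- counting
  have cnt_lt : ∀ (w z : Fin n → ℝ), (∀ i j : Fin n, i ≤ j → w j ≤ w i) →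
      (∀ i j : Fin n, i ≤ j → z j ≤ z i) → ∀ i : Fin n, z i < w i →
      (Finset.univ.filter fun l => w i ≤ z l).card <
        (Finset.univ.filter fun l => w i ≤ w l).card := by
    intro w z hw hz i hzi
    have h1 : (Finset.univ.filter fun l => w i ≤ z l) ⊆ Finset.Iio i := by
      intro l hl
      rw [Finset.mem_filter] at hl
      rw [Finset.mem_Iio]
      by_contra hli
      push_neg at hli
      exact absurd hl.2 (not_le.2 (lt_of_le_of_lt (hz i l hli) hzi))
    have h2 : Finset.Iic i ⊆ Finset.univ.filter fun l => w i ≤ w l := by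
      intro l hl
      rw [Finset.mem_Iic] at hl
      exact Finset.mem_filter.2 ⟨Finset.mem_univ l, hw l i hl⟩
    calc (Finset.univ.filter fun l => w i ≤ z l).card
        ≤ (Finset.Iio i).card := Finset.card_le_card h1
      _ = (i : ℕ) := by rw [Fin.card_Iio]
      _ < (i : ℕ) + 1 := Nat.lt_succ_self _
      _ = (Finset.Iic i).card := by rw [Fin.card_Iic]
      _ ≤ _ := Finset.card_le_card h2
  -- F is nonzero somewhere on the grid
  have hFex : ∃ u ∈ us, F u ≠ 0 := by
    have hex : ∃ i, x i ≠ y i := by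
      by_contra h; push_neg at h; exact hne (funext h)
    obtain ⟨i, hi⟩ := hex
    rcases lt_or_gt_of_ne hi with h | h
    · refine ⟨y i, hmemy i (lt_of_le_of_lt (hx0 i) h), ?_⟩
      have hc := cnt_lt y x hy hx i h
      rw [hFcard (y i)]
      have : ((Finset.univ.filter fun l => y i ≤ x l).card : ℝ) <
          ((Finset.univ.filter fun l => y i ≤ y l).card : ℝ) := by exact_mod_cast hc
      intro hzero
      rw [sub_eq_zero] at hzero
      rw [hzero] at this
      exact lt_irrefl _ this
    · refine ⟨x i, hmemx i (lt_of_le_of_lt (hy0 i) h), ?_⟩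
      have hc := cnt_lt x y hx hy i h
      rw [hFcard (x i)]
      have : ((Finset.univ.filter fun l => x i ≤ y l).card : ℝ) <
          ((Finset.univ.filter fun l => x i ≤ x l).card : ℝ) := by exact_mod_cast hc
      intro hzero
      rw [sub_eq_zero] at hzero
      rw [hzero] at this
      exact lt_irrefl _ this
  -- total variation bound
  set a₀ : ℝ := us.headD 0 + 1 with ha₀
  have hhead0 : 0 ≤ us.headD 0 := by
    cases hus' : us with
    | nil => simp
    | cons v rest => simpa using le_of_lt (huspos v (by rw [hus']; simp))
  have hlta : ∀ u ∈ us, u < a₀ := fun u hu =>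
    lt_of_le_of_lt (headD_ge huspair u hu) (by rw [ha₀]; linarith)
  have hchia : ∀ (w : Fin n → ℝ), (∀ i, 0 ≤ w i) → (∀ i, 0 < w i → w i ∈ us) →
      ∀ i : Fin n, chi (w i) a₀ = 0 := by
    intro w hw0 hwmem i
    unfold chi
    rw [if_neg]
    push_neg
    rcases eq_or_lt_of_le (hw0 i) with hh | hh
    · rw [ha₀, ← hh]; linarith
    · exact hlta (w i) (hwmem i hh)
  have htv : tvl 0 (us.map F) ≤ 2 * n := by
    have hFa : F a₀ = 0 := by
      show (∑ i, chi (x i) a₀) - (∑ i, chi (y i) a₀) = 0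
      rw [Finset.sum_congr rfl fun i _ => hchia x hx0 hmemx i,
        Finset.sum_congr rfl fun i _ => hchia y hy0 hmemy i]
      simp
    have hsplit : ∀ u, F u = (∑ i, chi (x i) u) + ∑ i, -(chi (y i) u) := by
      intro u
      show (∑ i, chi (x i) u) - (∑ i, chi (y i) u) = _
      rw [Finset.sum_neg_distrib]
      ring
    have key := tvl_map_add' (fun w => ∑ i, chi (x i) w) (fun w => ∑ i, -(chi (y i) w)) F
      hsplit us a₀
    have hx1 : tvl ((fun w => ∑ i, chi (x i) w) a₀) (us.map fun w => ∑ i, chi (x i) w) ≤ n := by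
      refine le_trans (tvl_map_sum' Finset.univ (fun i => chi (x i)) _ (fun u => rfl) a₀ us) ?_
      calc ∑ i : Fin n, tvl (chi (x i) a₀) (us.map (chi (x i)))
          ≤ ∑ _i : Fin n, (1:ℝ) := by
            refine Finset.sum_le_sum fun i _ => ?_
            refine le_trans (tvl_map_chi (x i) us a₀ hlta huspair) ?_
            linarith [chi_nonneg (x i) a₀]
        _ = n := by simp
    have hy1 : tvl ((fun w => ∑ i, -(chi (y i) w)) a₀) (us.map fun w => ∑ i, -(chi (y i) w)) ≤ n := by
      refine le_trans (tvl_map_sum' Finset.univ (fun i => fun v => -(chi (y i) v)) _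
        (fun u => rfl) a₀ us) ?_
      calc ∑ i : Fin n, tvl (-(chi (y i) a₀)) (us.map fun v => -(chi (y i) v))
          = ∑ i : Fin n, tvl (chi (y i) a₀) (us.map (chi (y i))) :=
            Finset.sum_congr rfl fun i _ => tvl_map_neg (chi (y i)) us a₀
        _ ≤ ∑ _i : Fin n, (1:ℝ) := by
            refine Finset.sum_le_sum fun i _ => ?_
            refine le_trans (tvl_map_chi (y i) us a₀ hlta huspair) ?_
            linarith [chi_nonneg (y i) a₀]
        _ = n := by simp
    have : tvl (F a₀) (us.map F) ≤ 2 * n := by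
      refine le_trans key ?_
      linarith
    rwa [hFa] at this
  -- number of flips
  set cur : ℝ := fsign F us with hcurdef
  have hcur : cur = 1 ∨ cur = -1 := fsign_eq F us
  set K : List ℝ := zs F cur us with hKdef
  have hlen : K.length < n := by
    have h1 := tvl_fsign_bound F us hint hFex
    rw [← hcurdef, ← hKdef] at h1
    have h2 : 2 * (K.length : ℝ) + 1 ≤ 2 * n := le_trans h1 htv
    by_contra h
    push_neg at h
    have : (n : ℝ) ≤ K.length := by exact_mod_cast h
    linarith
  -- the polynomial with roots at squared flip locations
  set P : Polynomial ℝ := (K.map fun z => Polynomial.X - Polynomial.C (z ^ 2)).prod with hP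
  have hPdeg : P.natDegree < n := by
    have h1 : P.natDegree ≤
        ((K.map fun z => Polynomial.X - Polynomial.C (z ^ 2)).map Polynomial.natDegree).sum :=
      Polynomial.natDegree_list_prod_le _
    have h2 : ((K.map fun z => Polynomial.X - Polynomial.C (z ^ 2)).map Polynomial.natDegree)
        = K.map fun _ => 1 := by
      rw [List.map_map]
      refine List.map_congr_left fun z _ => ?_
      show (Polynomial.X - Polynomial.C (z ^ 2)).natDegree = 1
      exact Polynomial.natDegree_X_sub_C _
    rw [h2] at h1
    have h3 : (K.map fun _ => (1:ℕ)).sum = K.length := by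
      simp [List.map_const', List.sum_replicate]
    rw [h3] at h1
    exact lt_of_le_of_lt h1 hlen
  -- the antiderivative Q
  set Q : ℝ → ℝ :=
    fun t => ∑ m ∈ Finset.range n, (cur * P.coeff m / ((2 * m + 3 : ℕ) : ℝ)) * t ^ (2 * m + 3)
    with hQ
  have hQ0 : Q 0 = 0 := by
    rw [hQ]
    refine Finset.sum_eq_zero fun m _ => ?_
    rw [zero_pow (by omega), mul_zero]
  have hQcont : Continuous Q := by
    rw [hQ]
    exact continuous_finset_sum _ fun m _ => continuous_const.mul (continuous_pow _)
  have hQd : ∀ t : ℝ, HasDerivAt Q (cur * t ^ 2 * ((K.map fun z => t ^ 2 - z ^ 2).prod)) t := by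
    intro t
    have h1 : HasDerivAt Q (∑ m ∈ Finset.range n,
        (cur * P.coeff m / ((2 * m + 3 : ℕ) : ℝ)) * (((2 * m + 3 : ℕ) : ℝ) * t ^ (2 * m + 2))) t := by
      rw [hQ]
      apply HasDerivAt.fun_sum
      intro m _
      have hh := (hasDerivAt_pow (2 * m + 3) t).const_mul (cur * P.coeff m / ((2 * m + 3 : ℕ) : ℝ))
      convert hh using 1 <;> rfl
    have h2 : (∑ m ∈ Finset.range n,
        (cur * P.coeff m / ((2 * m + 3 : ℕ) : ℝ)) * (((2 * m + 3 : ℕ) : ℝ) * t ^ (2 * m + 2)))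
        = cur * t ^ 2 * Polynomial.eval (t ^ 2) P := by
      rw [Polynomial.eval_eq_sum_range' hPdeg, Finset.mul_sum]
      refine Finset.sum_congr rfl fun m _ => ?_
      have hne : ((2 * m + 3 : ℕ) : ℝ) ≠ 0 := by positivity
      have hpow : (t ^ 2) ^ m * t ^ 2 = t ^ (2 * m + 2) := by
        rw [← pow_mul, ← pow_add]
      field_simp
      rw [← hpow]
      ring
    have h3 : Polynomial.eval (t ^ 2) P = (K.map fun z => t ^ 2 - z ^ 2).prod := by
      rw [hP, Polynomial.eval_list_prod, List.map_map]
      congr 1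
      refine List.map_congr_left fun z _ => ?_
      simp [Function.comp]
    rw [h2, h3] at h1
    exact h1
  -- apply the positivity lemma
  have hmain := main_pos F us huspair huspos cur hcur a₀ hlta (fun _ => 1)
    (fun t _ _ => one_pos) Q hQcont
    (by
      intro t ht0 hta
      have := hQd t
      rw [← hKdef]
      convert this using 1
      ring)
  have hpos : 0 < asum Q F us := hmain.2 hFex
  -- ... but the Abel sum vanishes
  have hzero : asum Q F us = 0 := by
    have hsplit : asum Q F us
        = (∑ i, asum Q (fun u => chi (x i) u) us) - ∑ i, asum Q (fun u => chi (y i) u) us := by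
      rw [hF]
      have e1 : (fun u => (∑ i, chi (x i) u) - ∑ i, chi (y i) u)
          = fun u => (∑ i, chi (x i) u) + (fun v => -(∑ i, chi (y i) v)) u := by
        funext u; simp only; ring
      rw [e1, asum_add, asum_neg]
      rw [asum_sum Q Finset.univ (fun i => fun u => chi (x i) u) us,
        asum_sum Q Finset.univ (fun i => fun u => chi (y i) u) us]
      ring
    have hchix : ∀ i : Fin n, asum Q (fun u => chi (x i) u) us = Q (x i) := fun i =>
      asum_chi Q hQ0 (x i) (hx0 i) us huspair huspos (hmemx i)
    have hchiy : ∀ i : Fin n, asum Q (fun u => chi (y i) u) us = Q (y i) := fun i =>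
      asum_chi Q hQ0 (y i) (hy0 i) us huspair huspos (hmemy i)
    rw [hsplit, Finset.sum_congr rfl fun i _ => hchix i, Finset.sum_congr rfl fun i _ => hchiy i]
    have hswap : ∀ w : Fin n → ℝ, (∑ i, Q (w i))
        = ∑ m ∈ Finset.range n, (cur * P.coeff m / ((2 * m + 3 : ℕ) : ℝ)) * ∑ i, w i ^ (2 * m + 3) := by
      intro w
      rw [hQ]
      rw [Finset.sum_comm]
      refine Finset.sum_congr rfl fun m _ => ?_
      rw [Finset.mul_sum]
    rw [hswap x, hswap y]
    rw [sub_eq_zero]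
    refine Finset.sum_congr rfl fun m hm => ?_
    rw [hsum m (Finset.mem_range.1 hm)]
  rw [hzero] at hpos
  exact lt_irrefl _ hpos

end Stmt3Aux

/-- The half-open simplex of multisoliton parameters: `β ∈ ℝⁿ` such that for some
`0 ≤ N ≤ n`, `β_1 > β_2 > ⋯ > β_N > 0` and `β_{N+1} = ⋯ = β_n = 0`. -/
def simplexS (n : ℕ) : Set (Fin n → ℝ) :=
  {β | ∃ N ≤ n, (∀ i : Fin n, (i : ℕ) < N → 0 < β i) ∧
    (∀ i j : Fin n, i < j → (j : ℕ) < N → β j < β i) ∧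
    (∀ i : Fin n, N ≤ (i : ℕ) → β i = 0)}

/-- `Φ(β)_m = (-1)^{m+1} (2^{2m+1}/(2m+1)) ∑_j β_j^{2m+1}` for `m = 1, …, n`
(here the index `m : Fin n` corresponds to the mathematical index `m + 1`). -/
noncomputable def PhiMap (n : ℕ) (β : Fin n → ℝ) : Fin n → ℝ :=
  fun m => (-1 : ℝ) ^ (m : ℕ) * 2 ^ (2 * (m : ℕ) + 3) / (2 * (m : ℕ) + 3 : ℝ) *
    ∑ j, β j ^ (2 * (m : ℕ) + 3)

namespace Stmt3Aux

/-- the closed cone of nonincreasing nonnegative vectors -/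
def Cset (n : ℕ) : Set (Fin n → ℝ) :=
  {β | (∀ i j : Fin n, i ≤ j → β j ≤ β i) ∧ ∀ i, 0 ≤ β i}

lemma simplex_sub (n : ℕ) : simplexS n ⊆ Cset n := by
  rintro β ⟨N, hNn, hpos, hstrict, hzero⟩
  constructor
  · intro i j hij
    by_cases hj : (j : ℕ) < N
    · rcases eq_or_lt_of_le hij with rfl | hlt
      · exact le_rfl
      · exact le_of_lt (hstrict i j hlt hj)
    · rw [hzero j (not_lt.1 hj)]
      by_cases hi : (i : ℕ) < N
      · exact le_of_lt (hpos i hi)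
      · rw [hzero i (not_lt.1 hi)]
  · intro i
    by_cases hi : (i : ℕ) < N
    · exact le_of_lt (hpos i hi)
    · rw [hzero i (not_lt.1 hi)]

lemma cset_closed (n : ℕ) : IsClosed (Cset n) := by
  have he : Cset n = (⋂ (i : Fin n), ⋂ (j : Fin n), ⋂ (_ : i ≤ j), {β : Fin n → ℝ | β j ≤ β i}) ∩
      ⋂ (i : Fin n), {β : Fin n → ℝ | 0 ≤ β i} := by
    ext β
    simp only [Cset, Set.mem_setOf_eq, Set.mem_inter_iff, Set.mem_iInter]
  rw [he]
  exact IsClosed.inter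
    (isClosed_iInter fun i => isClosed_iInter fun j => isClosed_iInter fun _ =>
      isClosed_le (continuous_apply j) (continuous_apply i))
    (isClosed_iInter fun i => isClosed_le continuous_const (continuous_apply i))

lemma phi_cont (n : ℕ) : Continuous (PhiMap n) :=
  continuous_pi fun m => Continuous.mul continuous_const
    (continuous_finset_sum _ fun j _ => (continuous_apply j).pow _)

lemma phi_inj {n : ℕ} {x y : Fin n → ℝ} (hx : x ∈ Cset n) (hy : y ∈ Cset n)
    (h : PhiMap n x = PhiMap n y) : x = y := by
  apply core_inj n x y hx.1 hx.2 hy.1 hy.2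
  intro m hm
  have hco := congrFun h ⟨m, hm⟩
  unfold PhiMap at hco
  simp only [Fin.val_mk] at hco
  have hc : ((-1 : ℝ) ^ m * 2 ^ (2 * m + 3) / (2 * (m : ℝ) + 3)) ≠ 0 := by
    apply div_ne_zero
    · exact mul_ne_zero (pow_ne_zero _ (by norm_num)) (by positivity)
    · positivity
  exact mul_left_cancel₀ hc hco

end Stmt3Aux

/-- **The moment map is a homeomorphism onto its image.**
For `n ≥ 1`, the map `Φ` restricted to the half-open simplex `S` is a homeomorphism
from `S` (subspace topology) onto its image `Φ(S)` (subspace topology). -/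
theorem stmt_3 (n : ℕ) (hn : 1 ≤ n) :
    IsHomeomorph (fun β : simplexS n =>
      (⟨PhiMap n β.1, Set.mem_image_of_mem (PhiMap n) β.2⟩ :
        PhiMap n '' simplexS n)) := by
  classical
  open Stmt3Aux in
  rw [isHomeomorph_iff_continuous_isClosedMap_bijective]
  refine ⟨?_, ?_, ?_, ?_⟩
  · -- continuity
    exact Continuous.subtype_mk ((Stmt3Aux.phi_cont n).comp continuous_subtype_val) _
  · -- closed map
    intro Fc hFc
    apply IsSeqClosed.isClosed
    intro seq q hmem htend
    choose p hpF hpf using hmem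
    have hval : Filter.Tendsto (fun k => ((seq k : PhiMap n '' simplexS n) : Fin n → ℝ))
        Filter.atTop (nhds (q : Fin n → ℝ)) :=
      (continuous_subtype_val.tendsto q).comp htend
    have hphi : ∀ k, PhiMap n ((p k : simplexS n) : Fin n → ℝ)
        = ((seq k : PhiMap n '' simplexS n) : Fin n → ℝ) := fun k => congrArg Subtype.val (hpf k)
    obtain ⟨β₀, hβ₀S, hβ₀E⟩ := q.2
    have hn0 : 0 < n := hn
    set i0 : Fin n := ⟨0, hn0⟩ with hi0
    have hsum3 : ∀ β : Fin n → ℝ, PhiMap n β i0 = 8 / 3 * ∑ j, β j ^ 3 := by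
      intro β
      show (-1 : ℝ) ^ ((i0 : ℕ)) * 2 ^ (2 * (i0 : ℕ) + 3) / (2 * ((i0 : ℕ) : ℝ) + 3) *
        ∑ j, β j ^ (2 * (i0 : ℕ) + 3) = _
      rw [hi0]
      norm_num
    have hw : Filter.Tendsto (fun k => PhiMap n ((p k : simplexS n) : Fin n → ℝ) i0)
        Filter.atTop (nhds ((q : Fin n → ℝ) i0)) := by
      have h1 := ((continuous_apply i0).tendsto (q : Fin n → ℝ)).comp hval
      have h2 : (fun k => PhiMap n ((p k : simplexS n) : Fin n → ℝ) i0)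
          = fun k => ((seq k : PhiMap n '' simplexS n) : Fin n → ℝ) i0 :=
        funext fun k => by rw [hphi k]
      rw [h2]
      exact h1
    obtain ⟨A, hA⟩ := hw.bddAbove_range
    have hAbound : ∀ k, PhiMap n ((p k : simplexS n) : Fin n → ℝ) i0 ≤ A :=
      fun k => hA ⟨k, rfl⟩
    set Bd : ℝ := max 1 (3 / 8 * A) with hBd
    have hcoord : ∀ k, ((p k : simplexS n) : Fin n → ℝ) ∈
        Set.pi Set.univ (fun _ : Fin n => Set.Icc (0 : ℝ) Bd) := by
      intro k
      have hC := Stmt3Aux.simplex_sub n (p k).2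
      intro j _
      refine ⟨hC.2 j, ?_⟩
      set β := ((p k : simplexS n) : Fin n → ℝ)
      have h3 : β j ^ 3 ≤ ∑ l, β l ^ 3 :=
        Finset.single_le_sum (fun l _ => pow_nonneg (hC.2 l) 3) (Finset.mem_univ j)
      have hsum' : ∑ l, β l ^ 3 ≤ 3 / 8 * A := by
        have hk := hAbound k
        rw [hsum3 β] at hk
        linarith
      by_cases h1 : β j ≤ 1
      · exact le_trans h1 (le_max_left _ _)
      · push_neg at h1
        have h4 : β j ≤ β j ^ 3 := le_self_pow₀ h1.le (by norm_num)
        exact le_trans (le_trans h4 (le_trans h3 hsum')) (le_max_right _ _)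
    obtain ⟨γ, hγK, φ, hφm, hφt⟩ :=
      (isCompact_univ_pi fun _ : Fin n => isCompact_Icc).tendsto_subseq hcoord
    have hγC : γ ∈ Stmt3Aux.Cset n :=
      (Stmt3Aux.cset_closed n).mem_of_tendsto hφt
        (Filter.Eventually.of_forall fun k => Stmt3Aux.simplex_sub n (p (φ k)).2)
    have hφphi : Filter.Tendsto (fun k => PhiMap n ((p (φ k) : simplexS n) : Fin n → ℝ))
        Filter.atTop (nhds (PhiMap n γ)) := ((Stmt3Aux.phi_cont n).tendsto γ).comp hφt
    have hφval : Filter.Tendsto (fun k => ((seq (φ k) : PhiMap n '' simplexS n) : Fin n → ℝ))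
        Filter.atTop (nhds (q : Fin n → ℝ)) := hval.comp hφm.tendsto_atTop
    have hEq : PhiMap n γ = (q : Fin n → ℝ) := by
      refine tendsto_nhds_unique hφphi ?_
      have h2 : (fun k => PhiMap n ((p (φ k) : simplexS n) : Fin n → ℝ))
          = fun k => ((seq (φ k) : PhiMap n '' simplexS n) : Fin n → ℝ) :=
        funext fun k => hphi (φ k)
      rw [h2]
      exact hφval
    have hγβ : γ = β₀ :=
      Stmt3Aux.phi_inj hγC (Stmt3Aux.simplex_sub n hβ₀S) (by rw [hEq, ← hβ₀E])
    have hγS : γ ∈ simplexS n := by rw [hγβ]; exact hβ₀S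
    have hsub : Filter.Tendsto (fun k => p (φ k)) Filter.atTop
        (nhds (⟨γ, hγS⟩ : simplexS n)) := by
      rw [tendsto_subtype_rng]
      exact hφt
    have hmemF : (⟨γ, hγS⟩ : simplexS n) ∈ Fc :=
      hFc.isSeqClosed (fun k => hpF (φ k)) hsub
    exact ⟨⟨γ, hγS⟩, hmemF, Subtype.ext hEq⟩
  · -- injective
    intro a b hab
    have h1 : PhiMap n a.1 = PhiMap n b.1 := congrArg Subtype.val hab
    exact Subtype.ext
      (Stmt3Aux.phi_inj (Stmt3Aux.simplex_sub n a.2) (Stmt3Aux.simplex_sub n b.2) h1)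
  · -- surjective
    rintro ⟨w, β, hβ, rfl⟩
    exact ⟨⟨β, hβ⟩, rfl⟩
end

section
/- Fix an integer n ≥ 1 and real numbers β_1 > β_2 > ⋯ > β_n > 0. Then there is a unique vector (C_1, …, C_n) ∈ ℝ^n satisfying the linear system Σ_{j=1}^{n} C_j (−1)^{j−1} 2^{2j+1} β_m^{2j} = (−1)^n 2^{2n+3} β_m^{2n+2} for every m = 1, …, n, and it is given explicitly by C_j = −2^{2n+2−2j} σ_{n−j+1}(β_1², …, β_n²) for j = 1, …, n, where σ_k denotes the k-th elementary symmetric polynomial in n variables. In particular, C_j < 0 for every j. -/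
open Polynomial Finset in
lemma aux_vieta (n : ℕ) (x : Fin n → ℝ) (m : Fin n) :
    ∑ k ∈ Finset.range (n+1),
      (-1:ℝ)^(n-k) * (∑ t ∈ Finset.powersetCard (n-k) Finset.univ, ∏ i ∈ t, x i) * x m ^ k
      = 0 := by
  have hP : (∏ i : Fin n, (X - C (x i))).eval (x m) = 0 := by
    rw [eval_prod]
    exact Finset.prod_eq_zero (Finset.mem_univ m) (by simp)
  have hdeg : (∏ i : Fin n, (X - C (x i))).natDegree = n := by
    rw [natDegree_prod _ _ fun i _ => X_sub_C_ne_zero (x i)]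
    simp
  have hcoeff : ∀ k ≤ n, (∏ i : Fin n, (X - C (x i))).coeff k
      = (-1:ℝ)^(n-k) * ∑ t ∈ Finset.powersetCard (n-k) Finset.univ, ∏ i ∈ t, x i := by
    intro k hk
    have h1 : (∏ i : Fin n, (X - C (x i))) = ∏ i : Fin n, (X + C (-(x i))) := by
      simp [sub_eq_add_neg]
    rw [h1, Finset.prod_X_add_C_coeff _ _ (by simpa using hk)]
    rw [Finset.card_univ, Fintype.card_fin, Finset.mul_sum]
    refine Finset.sum_congr rfl fun t ht => ?_
    have hct : t.card = n - k := (Finset.mem_powersetCard.mp ht).2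
    rw [show (∏ i ∈ t, -x i) = ∏ i ∈ t, (-1) * x i by simp,
      Finset.prod_mul_distrib, Finset.prod_const, hct]
  calc ∑ k ∈ Finset.range (n+1),
      (-1:ℝ)^(n-k) * (∑ t ∈ Finset.powersetCard (n-k) Finset.univ, ∏ i ∈ t, x i) * x m ^ k
      = ∑ k ∈ Finset.range (n+1), (∏ i : Fin n, (X - C (x i))).coeff k * x m ^ k :=
        Finset.sum_congr rfl fun k hk => by
          rw [hcoeff k (by have := Finset.mem_range.mp hk; omega)]
    _ = (∏ i : Fin n, (X - C (x i))).eval (x m) :=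
        (eval_eq_sum_range' (by rw [hdeg]; omega) _).symm
    _ = 0 := hP

open Finset in
lemma aux_key (n : ℕ) (x : Fin n → ℝ) (m : Fin n) :
    ∑ k ∈ Finset.range n,
      (-1:ℝ)^k * (∑ t ∈ Finset.powersetCard (n-k) Finset.univ, ∏ i ∈ t, x i) * x m ^ (k+1)
      = (-1:ℝ)^(n+1) * x m ^ (n+1) := by
  have h := aux_vieta n x m
  rw [Finset.sum_range_succ] at h
  simp only [Nat.sub_self, pow_zero, one_mul, Finset.powersetCard_zero,
    Finset.sum_singleton, Finset.prod_empty, mul_one] at h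
  have hS : ∑ k ∈ Finset.range n,
      (-1:ℝ)^(n-k) * (∑ t ∈ Finset.powersetCard (n-k) Finset.univ, ∏ i ∈ t, x i) * x m ^ k
      = -(x m ^ n) := by linarith
  have hsign : ∀ k < n, ((-1:ℝ))^k = (-1)^n * (-1)^(n-k) := by
    intro k hk
    rw [← pow_add, show n + (n-k) = k + 2*(n-k) by omega, pow_add, pow_mul]
    simp
  calc ∑ k ∈ Finset.range n,
      (-1:ℝ)^k * (∑ t ∈ Finset.powersetCard (n-k) Finset.univ, ∏ i ∈ t, x i) * x m ^ (k+1)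
      = ∑ k ∈ Finset.range n, ((-1:ℝ)^n * x m) *
          ((-1:ℝ)^(n-k) * (∑ t ∈ Finset.powersetCard (n-k) Finset.univ, ∏ i ∈ t, x i) * x m ^ k) := by
        refine Finset.sum_congr rfl fun k hk => ?_
        rw [hsign k (Finset.mem_range.mp hk)]; ring
    _ = ((-1:ℝ)^n * x m) * ∑ k ∈ Finset.range n,
          (-1:ℝ)^(n-k) * (∑ t ∈ Finset.powersetCard (n-k) Finset.univ, ∏ i ∈ t, x i) * x m ^ k :=
        (Finset.mul_sum _ _ _).symm
    _ = ((-1:ℝ)^n * x m) * (-(x m ^ n)) := by rw [hS]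
    _ = (-1:ℝ)^(n+1) * x m ^ (n+1) := by ring

/-- **The Lagrange-multiplier linear system and its explicit solution.**
Fix `n ≥ 1` and `β_1 > ⋯ > β_n > 0`.  The linear system
`∑_{j=1}^n C_j (-1)^{j-1} 2^{2j+1} β_m^{2j} = (-1)^n 2^{2n+3} β_m^{2n+2}` (`m = 1, …, n`)
has the unique solution `C_j = -2^{2n+2-2j} σ_{n-j+1}(β_1², …, β_n²)`, where `σ_k` is the
`k`-th elementary symmetric polynomial; in particular each `C_j < 0`.
(Here the index `j : Fin n` corresponds to the mathematical index `j + 1`, so the sign is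
`(-1)^j`, the power of `2` in the system is `2^{2j+3}`, the exponent of `β_m` is `2j+2`,
and the explicit solution reads `C_j = -2^{2n-2j} σ_{n-j}(β²)`.) -/
theorem stmt_6 (n : ℕ) (hn : 1 ≤ n) (β : Fin n → ℝ)
    (hpos : ∀ i, 0 < β i) (hanti : StrictAnti β) :
    let Cexp : Fin n → ℝ := fun j =>
      -(2 : ℝ) ^ (2 * n - 2 * (j : ℕ)) *
        ∑ t ∈ Finset.powersetCard (n - (j : ℕ)) Finset.univ, ∏ i ∈ t, (β i) ^ 2
    (∀ m : Fin n,
      ∑ j, Cexp j * (-1 : ℝ) ^ (j : ℕ) * 2 ^ (2 * (j : ℕ) + 3) * β m ^ (2 * (j : ℕ) + 2)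
        = (-1 : ℝ) ^ n * 2 ^ (2 * n + 3) * β m ^ (2 * n + 2)) ∧
    (∀ C : Fin n → ℝ,
      (∀ m : Fin n,
        ∑ j, C j * (-1 : ℝ) ^ (j : ℕ) * 2 ^ (2 * (j : ℕ) + 3) * β m ^ (2 * (j : ℕ) + 2)
          = (-1 : ℝ) ^ n * 2 ^ (2 * n + 3) * β m ^ (2 * n + 2)) → C = Cexp) ∧
    (∀ j, Cexp j < 0) := by
  intro Cexp
  have hxpos : ∀ i, (0:ℝ) < β i ^ 2 := fun i => pow_pos (hpos i) 2
  have hxinj : Function.Injective (fun i => β i ^ 2) := by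
    intro a b hab
    have h1 : Real.sqrt (β a ^ 2) = Real.sqrt (β b ^ 2) := by
      simpa using congrArg Real.sqrt hab
    rw [Real.sqrt_sq (hpos a).le, Real.sqrt_sq (hpos b).le] at h1
    exact hanti.injective h1
  have σpos : ∀ k ≤ n, 0 < ∑ t ∈ Finset.powersetCard k Finset.univ, ∏ i ∈ t, β i ^ 2 := by
    intro k hk
    refine Finset.sum_pos (fun t _ => Finset.prod_pos fun i _ => hxpos i) ?_
    exact Finset.powersetCard_nonempty.2 (by simpa using hk)
  have hβ2 : ∀ (m : Fin n) (k : ℕ), β m ^ (2 * k + 2) = (β m ^ 2) ^ (k + 1) := by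
    intro m k
    rw [show 2 * k + 2 = 2 * (k + 1) by ring, pow_mul]
  -- existence
  have hexist : ∀ m : Fin n,
      ∑ j, Cexp j * (-1 : ℝ) ^ (j : ℕ) * 2 ^ (2 * (j : ℕ) + 3) * β m ^ (2 * (j : ℕ) + 2)
        = (-1 : ℝ) ^ n * 2 ^ (2 * n + 3) * β m ^ (2 * n + 2) := by
    intro m
    have hkey := aux_key n (fun i => β i ^ 2) m
    calc ∑ j, Cexp j * (-1 : ℝ) ^ (j : ℕ) * 2 ^ (2 * (j : ℕ) + 3) * β m ^ (2 * (j : ℕ) + 2)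
        = ∑ k ∈ Finset.range n,
            (-(2:ℝ) ^ (2 * n - 2 * k) *
              ∑ t ∈ Finset.powersetCard (n - k) Finset.univ, ∏ i ∈ t, β i ^ 2) *
              (-1 : ℝ) ^ k * 2 ^ (2 * k + 3) * β m ^ (2 * k + 2) :=
          Fin.sum_univ_eq_sum_range (fun k =>
            (-(2:ℝ) ^ (2 * n - 2 * k) *
              ∑ t ∈ Finset.powersetCard (n - k) Finset.univ, ∏ i ∈ t, β i ^ 2) *
              (-1 : ℝ) ^ k * 2 ^ (2 * k + 3) * β m ^ (2 * k + 2)) n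
      _ = ∑ k ∈ Finset.range n, -(2:ℝ) ^ (2 * n + 3) *
            (((-1:ℝ) ^ k * ∑ t ∈ Finset.powersetCard (n - k) Finset.univ, ∏ i ∈ t, β i ^ 2) *
              (β m ^ 2) ^ (k + 1)) := by
          refine Finset.sum_congr rfl fun k hk => ?_
          have hkn := Finset.mem_range.mp hk
          have h2 : (2:ℝ) ^ (2 * n - 2 * k) * 2 ^ (2 * k + 3) = 2 ^ (2 * n + 3) := by
            rw [← pow_add]; congr 1; omega
          rw [hβ2, ← h2]; ring
      _ = -(2:ℝ) ^ (2 * n + 3) * ∑ k ∈ Finset.range n,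
            (((-1:ℝ) ^ k * ∑ t ∈ Finset.powersetCard (n - k) Finset.univ, ∏ i ∈ t, β i ^ 2) *
              (β m ^ 2) ^ (k + 1)) := (Finset.mul_sum _ _ _).symm
      _ = -(2:ℝ) ^ (2 * n + 3) * ((-1:ℝ) ^ (n + 1) * (β m ^ 2) ^ (n + 1)) := by rw [hkey]
      _ = (-1 : ℝ) ^ n * 2 ^ (2 * n + 3) * β m ^ (2 * n + 2) := by rw [hβ2 m n]; ring
  refine ⟨hexist, ?_, ?_⟩
  · -- uniqueness
    intro C hC
    have hzero : ∀ m : Fin n, ∑ j : Fin n, (C j - Cexp j) * (-4 * β m ^ 2) ^ (j : ℕ) = 0 := by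
      intro m
      have hd : ∑ j : Fin n, (C j - Cexp j) *
          ((-1 : ℝ) ^ (j : ℕ) * 2 ^ (2 * (j : ℕ) + 3) * β m ^ (2 * (j : ℕ) + 2)) = 0 := by
        have h1 := hC m
        have h2 := hexist m
        have h3 : ∑ j : Fin n, (C j - Cexp j) *
            ((-1 : ℝ) ^ (j : ℕ) * 2 ^ (2 * (j : ℕ) + 3) * β m ^ (2 * (j : ℕ) + 2)) =
            (∑ j, C j * (-1 : ℝ) ^ (j : ℕ) * 2 ^ (2 * (j : ℕ) + 3) * β m ^ (2 * (j : ℕ) + 2)) -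
            ∑ j, Cexp j * (-1 : ℝ) ^ (j : ℕ) * 2 ^ (2 * (j : ℕ) + 3) * β m ^ (2 * (j : ℕ) + 2) := by
          rw [← Finset.sum_sub_distrib]
          exact Finset.sum_congr rfl fun j _ => by ring
        rw [h3, h1, h2, sub_self]
      have hterm : ∀ j : Fin n,
          (-1 : ℝ) ^ (j : ℕ) * 2 ^ (2 * (j : ℕ) + 3) * β m ^ (2 * (j : ℕ) + 2) =
          (8 * β m ^ 2) * (-4 * β m ^ 2) ^ (j : ℕ) := by
        intro j
        rw [hβ2, show ((-4:ℝ) * β m ^ 2) ^ (j:ℕ) = (-1)^(j:ℕ) * 4^(j:ℕ) * (β m ^2)^(j:ℕ) by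
          rw [show (-4:ℝ) * β m ^2 = (-1) * 4 * β m ^2 by ring, mul_pow, mul_pow],
          show (4:ℝ)^(j:ℕ) = 2^(2*(j:ℕ)) by rw [pow_mul]; norm_num,
          show (2:ℝ)^(2*(j:ℕ)+3) = 2^(2*(j:ℕ)) * 8 by rw [pow_add]; norm_num]
        ring
      have h8 : (8 : ℝ) * β m ^ 2 ≠ 0 := ne_of_gt (by have := hxpos m; linarith)
      have : (8 * β m ^ 2) * ∑ j : Fin n, (C j - Cexp j) * (-4 * β m ^ 2) ^ (j : ℕ) = 0 := by
        rw [Finset.mul_sum]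
        rw [← hd]
        exact Finset.sum_congr rfl fun j _ => by rw [hterm j]; ring
      exact (mul_eq_zero.mp this).resolve_left h8
    set Q : Polynomial ℝ := ∑ j : Fin n, Polynomial.C (C j - Cexp j) * Polynomial.X ^ (j : ℕ)
      with hQ
    have hQeval : ∀ m : Fin n, Q.eval (-4 * β m ^ 2) = 0 := by
      intro m
      rw [hQ, Polynomial.eval_finset_sum]
      simpa using hzero m
    have hQdeg : Q.natDegree < n := by
      refine lt_of_le_of_lt (Polynomial.natDegree_sum_le_of_forall_le _ _ fun j _ => ?_)
        (by omega : n - 1 < n)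
      exact le_trans (Polynomial.natDegree_C_mul_X_pow_le _ _) (by omega)
    have hfinj : Function.Injective (fun m : Fin n => -4 * β m ^ 2) := by
      intro a b hab
      apply hxinj
      have : (-4:ℝ) * β a ^ 2 = -4 * β b ^ 2 := hab
      simp only []
      linarith
    have hQ0 : Q = 0 := by
      refine Polynomial.eq_zero_of_natDegree_lt_card_of_eval_eq_zero Q hfinj hQeval ?_
      simpa using hQdeg
    funext j
    have hc : Q.coeff (j : ℕ) = C j - Cexp j := by
      rw [hQ, Polynomial.finset_sum_coeff]
      rw [Finset.sum_eq_single j]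
      · rw [Polynomial.coeff_C_mul, Polynomial.coeff_X_pow, if_pos rfl, mul_one]
      · intro b _ hbj
        rw [Polynomial.coeff_C_mul, Polynomial.coeff_X_pow, if_neg (by
          exact fun h => hbj (Fin.ext h.symm)), mul_zero]
      · intro h; exact absurd (Finset.mem_univ j) h
    rw [hQ0] at hc
    simp only [Polynomial.coeff_zero] at hc
    linarith [hc.symm]
  · -- negativity
    intro j
    have h1 : 0 < ∑ t ∈ Finset.powersetCard (n - (j:ℕ)) Finset.univ, ∏ i ∈ t, β i ^ 2 :=
      σpos _ (by omega)
    have h2 : (0:ℝ) < 2 ^ (2 * n - 2 * (j : ℕ)) := by positivity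
    show -(2 : ℝ) ^ (2 * n - 2 * (j : ℕ)) *
        (∑ t ∈ Finset.powersetCard (n - (j : ℕ)) Finset.univ, ∏ i ∈ t, (β i) ^ 2) < 0
    nlinarith
end

section
/- Let ℓ ≥ 1, let 0 < s_1 < s_2 < ⋯ < s_ℓ be real numbers, and let 1 ≤ k_1 < k_2 < ⋯ < k_ℓ be integers. Then the ℓ × ℓ matrix with (i,j) entry (2k_j + 1) s_i^{2k_j} has strictly positive determinant. -/
open Polynomial Finset Matrix

/-- A nonzero real "polynomial with `n` monomials" has fewer than `n` distinct positive roots. -/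
lemma rootBound : ∀ n : ℕ, 1 ≤ n → ∀ (k : Fin n → ℕ) (c : Fin n → ℝ), StrictMono k →
    (∀ j, c j ≠ 0) → ∀ S : Finset ℝ, (∀ x ∈ S, 0 < x) →
    (∀ x ∈ S, ∑ j, c j * x ^ k j = 0) → S.card < n := by
  intro n hn
  induction n, hn using Nat.le_induction with
  | base =>
    intro k c hk hc S hSpos hSroot
    rw [Nat.lt_one_iff, Finset.card_eq_zero]
    by_contra hS
    obtain ⟨x, hx⟩ := Finset.nonempty_iff_ne_empty.2 hS
    have h := hSroot x hx
    rw [Fin.sum_univ_one] at h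
    rcases mul_eq_zero.1 h with h' | h'
    · exact hc 0 h'
    · exact (pow_pos (hSpos x hx) (k 0)).ne' h'
  | succ n hn IH =>
    intro k c hk hc S hSpos hSroot
    have hk0 : ∀ j, k 0 ≤ k j := fun j => hk.monotone (Fin.zero_le j)
    set p : ℝ[X] := ∑ j, C (c j) * X ^ (k j - k 0) with hp
    have hproot : ∀ x ∈ S, p.eval x = 0 := by
      intro x hx
      have hxpos := hSpos x hx
      have h := hSroot x hx
      have hxne : (x : ℝ) ^ k 0 ≠ 0 := (pow_pos hxpos _).ne'
      have key : x ^ k 0 * p.eval x = 0 := by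
        rw [hp, eval_finset_sum, Finset.mul_sum, ← h]
        refine Finset.sum_congr rfl fun j _ => ?_
        rw [eval_mul, eval_C, eval_pow, eval_X, mul_left_comm, ← pow_add,
          Nat.add_sub_cancel' (hk0 j)]
      exact (mul_eq_zero.1 key).resolve_left hxne
    have hpd : ∀ z : ℝ, p.derivative.eval z
        = ∑ j : Fin n, (c j.succ * ((k j.succ - k 0 : ℕ) : ℝ)) * z ^ (k j.succ - k 0 - 1) := by
      intro z
      rw [hp, derivative_sum, eval_finset_sum, Fin.sum_univ_succ]
      have hm0 : k (0 : Fin (n + 1)) - k 0 = 0 := Nat.sub_self _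
      simp only [hm0, pow_zero, derivative_C_mul, derivative_one, derivative_X_pow,
        eval_mul, eval_C, eval_pow, eval_X, eval_zero, mul_zero, zero_add]
      refine Finset.sum_congr rfl fun j _ => by ring
    rcases Nat.lt_or_ge S.card 2 with hcard | hcard
    · omega
    obtain ⟨t, ht⟩ : ∃ t, S.card = t + 1 := ⟨S.card - 1, by omega⟩
    rw [ht]
    have e := S.orderEmbOfFin ht
    have hmem : ∀ i, S.orderEmbOfFin ht i ∈ S := fun i => S.orderEmbOfFin_mem ht i
    have hrolle : ∀ i : Fin t, ∃ z,
        z ∈ Set.Ioo ((S.orderEmbOfFin ht i.castSucc : ℝ)) (S.orderEmbOfFin ht i.succ) ∧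
        p.derivative.eval z = 0 := by
      intro i
      have hab : (S.orderEmbOfFin ht i.castSucc : ℝ) < S.orderEmbOfFin ht i.succ :=
        (S.orderEmbOfFin ht).strictMono Fin.castSucc_lt_succ
      obtain ⟨z, hz1, hz2⟩ := exists_deriv_eq_zero hab p.continuousOn
        (by rw [hproot _ (hmem _), hproot _ (hmem _)])
      exact ⟨z, hz1, by rwa [Polynomial.deriv] at hz2⟩
    choose z hz1 hz2 using hrolle
    have hzmono : StrictMono z := by
      intro i j hij
      calc z i < S.orderEmbOfFin ht i.succ := (hz1 i).2
        _ ≤ S.orderEmbOfFin ht j.castSucc := (S.orderEmbOfFin ht).monotone (by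
            rw [Fin.le_def]
            simp only [Fin.val_succ, Fin.coe_castSucc]
            exact hij)
        _ < z j := (hz1 j).1
    have hzpos : ∀ i, 0 < z i :=
      fun i => (hSpos _ (hmem i.castSucc)).trans (hz1 i).1
    have hlt := IH (fun j => k j.succ - k 0 - 1) (fun j => c j.succ * ((k j.succ - k 0 : ℕ) : ℝ))
      (fun a b hab => by
        have h1 : k 0 < k a.succ := hk (Fin.succ_pos a)
        have h2 : k a.succ < k b.succ := hk (by exact Fin.succ_lt_succ_iff.2 hab)
        show k a.succ - k 0 - 1 < k b.succ - k 0 - 1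
        omega)
      (fun j => mul_ne_zero (hc j.succ) (by
        have h1 : k 0 < k j.succ := hk (Fin.succ_pos j)
        show ((k j.succ - k 0 : ℕ) : ℝ) ≠ 0
        exact Nat.cast_ne_zero.2 (by omega)))
      (Finset.image z Finset.univ)
      (by rintro x hx; obtain ⟨i, _, rfl⟩ := Finset.mem_image.1 hx; exact hzpos i)
      (by rintro x hx; obtain ⟨i, _, rfl⟩ := Finset.mem_image.1 hx
          rw [← hpd (z i)]; exact hz2 i)
    rw [Finset.card_image_of_injective _ hzmono.injective, Finset.card_univ,
      Fintype.card_fin] at hlt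
    omega

/-- Positivity of generalized Vandermonde determinants. -/
lemma gvd : ∀ (ℓ : ℕ) (x : Fin ℓ → ℝ), StrictMono x → (∀ i, 0 < x i) →
    ∀ (k : Fin ℓ → ℕ), StrictMono k → (∀ j, 0 < k j) →
    0 < Matrix.det (Matrix.of fun i j => x i ^ k j) := by
  intro ℓ
  induction ℓ with
  | zero => intro x _ _ k _ _; simp [Matrix.det_fin_zero]
  | succ n IH =>
    intro x hx hxpos k hk hkpos
    set y : ℝ → Fin (n + 1) → ℝ := fun t => Fin.snoc (fun i : Fin n => x i.castSucc) t with hy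
    set M : ℝ → Matrix (Fin (n+1)) (Fin (n+1)) ℝ :=
      fun t => Matrix.of fun i j => y t i ^ k j with hM
    set N : Fin (n+1) → Matrix (Fin n) (Fin n) ℝ :=
      fun j => Matrix.of fun i' j' => x i'.castSucc ^ k (j.succAbove j') with hN
    set c : Fin (n+1) → ℝ := fun j => (-1 : ℝ) ^ (n + (j : ℕ)) * Matrix.det (N j) with hc
    have hylast : ∀ t, y t (Fin.last n) = t := fun t => Fin.snoc_last _ _
    have hycast : ∀ t (i : Fin n), y t i.castSucc = x i.castSucc :=
      fun t i => Fin.snoc_castSucc _ _ _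
    have hF : ∀ t, Matrix.det (M t) = ∑ j, c j * t ^ k j := by
      intro t
      rw [Matrix.det_succ_row (M t) (Fin.last n)]
      refine Finset.sum_congr rfl fun j _ => ?_
      have h1 : M t (Fin.last n) j = t ^ k j := by
        rw [hM]; simp only [Matrix.of_apply]; rw [hylast]
      have h2 : (M t).submatrix (Fin.last n).succAbove j.succAbove = N j := by
        ext i' j'
        rw [Matrix.submatrix_apply, Fin.succAbove_last, hM, hN]
        simp only [Matrix.of_apply]
        rw [hycast]
      rw [h1, h2, hc]
      simp only [Fin.val_last]
      ring
    have hNpos : ∀ j, 0 < Matrix.det (N j) := by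
      intro j
      exact IH (fun i' => x i'.castSucc)
        (fun a b hab => hx (by exact Fin.castSucc_lt_castSucc_iff.2 hab))
        (fun i' => hxpos _)
        (fun j' => k (j.succAbove j'))
        (fun a b hab => hk ((Fin.strictMono_succAbove j) hab))
        (fun j' => hkpos _)
    have hcne : ∀ j, c j ≠ 0 := fun j => by
      rw [hc]
      exact mul_ne_zero (pow_ne_zero _ (by norm_num)) (hNpos j).ne'
    have hclast : 0 < c (Fin.last n) := by
      have h1 : c (Fin.last n) = (-1 : ℝ) ^ (n + n) * (N (Fin.last n)).det := by
        rw [hc]; simp only [Fin.val_last]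
      rw [h1, show ((-1 : ℝ) ^ (n + n)) = 1 from Even.neg_one_pow ⟨n, rfl⟩, one_mul]
      exact hNpos _
    -- the roots coming from the first n rows
    have hroots : ∀ i : Fin n, ∑ j, c j * (x i.castSucc) ^ k j = 0 := by
      intro i
      rw [← hF]
      refine Matrix.det_zero_of_row_eq (i := i.castSucc) (j := Fin.last n)
        (Fin.castSucc_lt_last i).ne ?_
      funext j
      rw [hM]
      simp only [Matrix.of_apply]
      rw [hylast, hycast]
    set b := x (Fin.last n) with hb
    set S0 : Finset ℝ := Finset.image (fun i : Fin n => x i.castSucc) Finset.univ with hS0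
    have hS0card : S0.card = n := by
      rw [hS0, Finset.card_image_of_injective _
        (fun a b hab => by
          have := hx.injective hab
          exact Fin.castSucc_injective n this), Finset.card_univ, Fintype.card_fin]
    have hS0lt : ∀ u ∈ S0, u < b := by
      rintro u hu
      obtain ⟨i, _, rfl⟩ := Finset.mem_image.1 hu
      exact hx (Fin.castSucc_lt_last i)
    have hS0pos : ∀ u ∈ S0, 0 < u := by
      rintro u hu
      obtain ⟨i, _, rfl⟩ := Finset.mem_image.1 hu
      exact hxpos _
    have hS0root : ∀ u ∈ S0, ∑ j, c j * u ^ k j = 0 := by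
      rintro u hu
      obtain ⟨i, _, rfl⟩ := Finset.mem_image.1 hu
      exact hroots i
    -- no roots at or beyond b
    have hnoroot : ∀ u, b ≤ u → ∑ j, c j * u ^ k j ≠ 0 := by
      intro u hu hzero
      have hun : u ∉ S0 := fun hmem => absurd hu (not_le.2 (hS0lt u hmem))
      have := rootBound (n + 1) (Nat.le_add_left 1 n) k c hk hcne (insert u S0)
        (by
          intro v hv
          rcases Finset.mem_insert.1 hv with rfl | hv
          · exact lt_of_lt_of_le (hxpos (Fin.last n)) hu
          · exact hS0pos v hv)
        (by
          intro v hv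
          rcases Finset.mem_insert.1 hv with rfl | hv
          · exact hzero
          · exact hS0root v hv)
      rw [Finset.card_insert_of_notMem hun, hS0card] at this
      omega
    -- the polynomial q
    set q : ℝ[X] := ∑ j : Fin (n+1), C (c j) * X ^ k j with hq
    have hqeval : ∀ t, q.eval t = ∑ j, c j * t ^ k j := by
      intro t
      rw [hq, eval_finset_sum]
      exact Finset.sum_congr rfl fun j _ => by rw [eval_mul, eval_C, eval_pow, eval_X]
    have hcoeff : q.coeff (k (Fin.last n)) = c (Fin.last n) := by
      rw [hq, finset_sum_coeff]
      simp only [coeff_C_mul_X_pow]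
      rw [Finset.sum_eq_single (Fin.last n)]
      · simp
      · intro j _ hj
        rw [if_neg]
        exact fun h => hj (hk.injective h.symm)
      · simp
    have hdegle : q.natDegree ≤ k (Fin.last n) := by
      rw [hq]
      exact natDegree_sum_le_of_forall_le _ _ fun j _ =>
        (natDegree_C_mul_X_pow_le _ _).trans (hk.monotone (Fin.le_last j))
    have hdeg : q.natDegree = k (Fin.last n) :=
      le_antisymm hdegle (le_natDegree_of_ne_zero (by rw [hcoeff]; exact hclast.ne'))
    have hlead : q.leadingCoeff = c (Fin.last n) := by
      rw [Polynomial.leadingCoeff, hdeg, hcoeff]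
    have hq0 : q ≠ 0 := fun h => by
      rw [h, leadingCoeff_zero] at hlead
      exact hclast.ne hlead
    have hdegpos : 0 < q.degree := by
      rw [degree_eq_natDegree hq0, hdeg]
      exact_mod_cast hkpos _
    have htendsto := q.tendsto_atTop_of_leadingCoeff_nonneg hdegpos (hlead ▸ hclast.le)
    -- final positivity
    have hgoal : 0 < ∑ j, c j * b ^ k j := by
      rcases lt_trichotomy (∑ j, c j * b ^ k j) 0 with hlt | heq | hgt
      · exfalso
        obtain ⟨T, hT0, hTb⟩ := ((htendsto.eventually_gt_atTop 0).and
          (Filter.eventually_gt_atTop b)).exists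
        have h0mem : (0 : ℝ) ∈ Set.Ioo (q.eval b) (q.eval T) := by
          constructor
          · rw [hqeval]; exact hlt
          · exact hT0
        obtain ⟨u, hu1, hu2⟩ := intermediate_value_Ioo hTb.le q.continuousOn h0mem
        exact hnoroot u hu1.1.le (by rw [← hqeval]; exact hu2)
      · exact absurd heq (hnoroot b le_rfl)
      · exact hgt
    have hMx : M b = Matrix.of fun i j => x i ^ k j := by
      ext i j
      rw [hM]
      simp only [Matrix.of_apply]
      congr 1
      refine Fin.lastCases ?_ (fun i' => ?_) i
      · rw [hylast]
      · rw [hycast]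
    rw [← hMx, hF]
    exact hgoal

/-- **Strict total positivity of the power kernel.**
Let `ℓ ≥ 1`, let `0 < s_1 < ⋯ < s_ℓ` and let `1 ≤ k_1 < ⋯ < k_ℓ` be integers.  Then the
`ℓ × ℓ` matrix with `(i, j)` entry `(2k_j + 1) s_i^{2k_j}` has strictly positive
determinant. -/
theorem stmt_8 (ℓ : ℕ) (hℓ : 1 ≤ ℓ) (s : Fin ℓ → ℝ) (hs : StrictMono s)
    (hpos : ∀ i, 0 < s i) (k : Fin ℓ → ℕ) (hk : StrictMono k) (hk1 : ∀ j, 1 ≤ k j) :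
    0 < Matrix.det
      (Matrix.of fun i j : Fin ℓ => ((2 * k j + 1 : ℕ) : ℝ) * s i ^ (2 * k j)) := by
  have h := Matrix.det_mul_row (fun j : Fin ℓ => ((2 * k j + 1 : ℕ) : ℝ))
    (Matrix.of fun i j : Fin ℓ => s i ^ (2 * k j))
  have heq : (Matrix.of fun i j : Fin ℓ => ((2 * k j + 1 : ℕ) : ℝ) * s i ^ (2 * k j))
      = Matrix.of fun i j : Fin ℓ =>
        (fun j : Fin ℓ => ((2 * k j + 1 : ℕ) : ℝ)) j *
          (Matrix.of fun i j : Fin ℓ => s i ^ (2 * k j)) i j := by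
    ext i j; simp
  rw [heq, h]
  apply mul_pos
  · exact Finset.prod_pos fun j _ => by positivity
  · exact gvd ℓ s hs hpos (fun j => 2 * k j)
      (fun a b hab => by have := hk hab; show 2 * k a < 2 * k b; omega)
      (fun j => by have := hk1 j; show 0 < 2 * k j; omega)
end

section
/- Fix integers n ≥ 1 and N ≥ 1, and real numbers α_1, …, α_n. Suppose the set Γ = { x ∈ ℝ^N : x_1, …, x_N ≥ 0 and Σ_{m=1}^{N} x_m^{2j+1} = α_j for j = 1, …, n } is nonempty. Then: (i) the function x ↦ (−1)^n Σ_{m=1}^{N} x_m^{2n+3} attains its minimum on Γ; and (ii) for every minimizer (β_1, …, β_N) ∈ Γ of this function, the nonzero coordinates among β_1, …, β_N take at most n distinct values. -/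
open Filter Matrix ContinuousLinearMap Topology

lemma det_A_ne (n : ℕ) (t : Fin (n+1) → ℝ) (ht : ∀ i, 0 < t i)
    (hinj : Function.Injective t) :
    (Matrix.of fun j i : Fin (n+1) => ((2*(j:ℕ)+3 : ℕ) : ℝ) * t i ^ (2*(j:ℕ)+2)).det ≠ 0 := by
  have hA : (Matrix.of fun j i : Fin (n+1) => ((2*(j:ℕ)+3 : ℕ) : ℝ) * t i ^ (2*(j:ℕ)+2))
      = Matrix.diagonal (fun j : Fin (n+1) => ((2*(j:ℕ)+3 : ℕ) : ℝ)) *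
        (Matrix.diagonal (fun i => t i ^ 2) * Matrix.vandermonde (fun i => t i ^ 2))ᵀ := by
    ext j i
    simp [Matrix.mul_apply, Matrix.diagonal, Matrix.vandermonde,
      Finset.sum_ite_eq', Matrix.transpose_apply, ← pow_mul, ← pow_add]
  rw [hA]
  have h2 : Function.Injective fun i => t i ^ 2 := fun a b hab => by
    have ha := ht a; have hb := ht b
    simp only at hab
    exact hinj (by nlinarith)
  rw [Matrix.det_mul, Matrix.det_transpose, Matrix.det_mul, Matrix.det_diagonal,
    Matrix.det_diagonal]
  refine mul_ne_zero (Finset.prod_ne_zero_iff.2 fun j _ => Nat.cast_ne_zero.2 (by omega))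
    (mul_ne_zero (Finset.prod_ne_zero_iff.2 fun i _ => pow_ne_zero _ (ht i).ne') ?_)
  exact Matrix.det_vandermonde_ne_zero_iff.2 h2

lemma map_nhds_g (n : ℕ) (t : Fin (n+1) → ℝ)
    (hdet : (Matrix.of fun j i : Fin (n+1) =>
      ((2*(j:ℕ)+3 : ℕ) : ℝ) * t i ^ (2*(j:ℕ)+2)).det ≠ 0) :
    Filter.map (fun x : Fin (n+1) → ℝ => fun j : Fin (n+1) => ∑ i, x i ^ (2*(j:ℕ)+3)) (𝓝 t)
      = 𝓝 (fun j : Fin (n+1) => ∑ i, t i ^ (2*(j:ℕ)+3)) := by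
  set A : Matrix (Fin (n+1)) (Fin (n+1)) ℝ :=
    Matrix.of fun j i => ((2*(j:ℕ)+3 : ℕ) : ℝ) * t i ^ (2*(j:ℕ)+2) with hA
  have hinvA : Invertible A := A.invertibleOfIsUnitDet (isUnit_iff_ne_zero.2 hdet)
  let eL : (Fin (n+1) → ℝ) ≃ₗ[ℝ] (Fin (n+1) → ℝ) := A.toLinearEquiv' hinvA
  let e : (Fin (n+1) → ℝ) ≃L[ℝ] (Fin (n+1) → ℝ) := eL.toContinuousLinearEquiv
  have hd : HasStrictFDerivAt
      (fun x : Fin (n+1) → ℝ => fun j : Fin (n+1) => ∑ i, x i ^ (2*(j:ℕ)+3))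
      (e : (Fin (n+1) → ℝ) →L[ℝ] (Fin (n+1) → ℝ)) t := by
    apply hasStrictFDerivAt_pi''
    intro j
    have hterm : ∀ i : Fin (n+1), HasStrictFDerivAt (fun x : Fin (n+1) → ℝ => x i ^ (2*(j:ℕ)+3))
        ((((2*(j:ℕ)+3 : ℕ) : ℝ) * t i ^ (2*(j:ℕ)+2)) • (proj i : (Fin (n+1) → ℝ) →L[ℝ] ℝ)) t := by
      intro i
      have h1 : HasStrictDerivAt (fun y : ℝ => y ^ (2*(j:ℕ)+3))
          (((2*(j:ℕ)+3 : ℕ) : ℝ) * t i ^ (2*(j:ℕ)+3-1)) (t i) := hasStrictDerivAt_pow _ _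
      have h2 : HasStrictFDerivAt (fun x : Fin (n+1) → ℝ => x i)
          (proj i : (Fin (n+1) → ℝ) →L[ℝ] ℝ) t :=
        (proj i : (Fin (n+1) → ℝ) →L[ℝ] ℝ).hasStrictFDerivAt
      have := h1.comp_hasStrictFDerivAt t h2
      have e : 2*(j:ℕ)+3-1 = 2*(j:ℕ)+2 := by omega
      rw [e] at this
      exact this
    have hsum := HasStrictFDerivAt.fun_sum (fun i (_ : i ∈ Finset.univ) => hterm i)
    refine hsum.congr_fderiv ?_
    ext v
    simp [ContinuousLinearMap.sum_apply, Matrix.mulVec, dotProduct, A,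
      mul_comm, mul_assoc]
    rw [show e v = A.mulVec v from rfl]
    simp only [Matrix.mulVec, dotProduct, A, Matrix.of_apply]
    exact Finset.sum_congr rfl fun i _ => by push_cast; ring
  exact hd.map_nhds_eq_of_equiv

/-- **Existence of a constrained minimizer and bound on its distinct values.**
Fix `n ≥ 1`, `N ≥ 1` and `α_1, …, α_n ∈ ℝ`.  Let
`Γ = { x ∈ ℝ^N : x_m ≥ 0 and ∑_m x_m^{2j+1} = α_j for j = 1, …, n }` be nonempty
(the index `j : Fin n` corresponds to the mathematical index `j + 1`, so the exponent is
`2j + 3`).  Then (i) the function `x ↦ (-1)^n ∑_m x_m^{2n+3}` attains its minimum on `Γ`,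
and (ii) every minimizer has nonzero coordinates taking at most `n` distinct values. -/
theorem stmt_9 (n N : ℕ) (hn : 1 ≤ n) (hN : 1 ≤ N) (α : Fin n → ℝ)
    (Γ : Set (Fin N → ℝ))
    (hΓ : Γ = {x | (∀ m, 0 ≤ x m) ∧
      ∀ j : Fin n, ∑ m, x m ^ (2 * (j : ℕ) + 3) = α j})
    (hne : Γ.Nonempty) :
    (∃ β ∈ Γ, ∀ x ∈ Γ,
      (-1 : ℝ) ^ n * ∑ m, β m ^ (2 * n + 3) ≤ (-1 : ℝ) ^ n * ∑ m, x m ^ (2 * n + 3)) ∧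
    (∀ β ∈ Γ, (∀ x ∈ Γ,
      (-1 : ℝ) ^ n * ∑ m, β m ^ (2 * n + 3) ≤ (-1 : ℝ) ^ n * ∑ m, x m ^ (2 * n + 3)) →
      (Set.range β \ {0}).ncard ≤ n) := by
  constructor
  · -- Part (i): existence of minimizer
    set f : (Fin N → ℝ) → ℝ := fun x => (-1 : ℝ) ^ n * ∑ m, x m ^ (2 * n + 3) with hf
    set M : ℝ := max 1 (α ⟨0, hn⟩) with hM
    have hsub : Γ ⊆ Set.pi Set.univ (fun _ : Fin N => Set.Icc (0:ℝ) M) := by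
      intro x hx
      rw [hΓ] at hx
      obtain ⟨hx0, hxc⟩ := hx
      intro m _
      refine ⟨hx0 m, ?_⟩
      have h3 : x m ^ 3 ≤ α ⟨0, hn⟩ := by
        have := hxc ⟨0, hn⟩
        simp only at this
        calc x m ^ 3 ≤ ∑ m', x m' ^ 3 :=
              Finset.single_le_sum (fun m' _ => pow_nonneg (hx0 m') 3) (Finset.mem_univ m)
          _ = α ⟨0, hn⟩ := by simpa using this
      by_contra hlt
      push_neg at hlt
      have h1 : (1:ℝ) ≤ M := le_max_left _ _
      have h2 : α ⟨0, hn⟩ ≤ M := le_max_right _ _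
      have hx1 : (1:ℝ) ≤ x m := le_trans h1 hlt.le
      have hxx : x m ≤ x m ^ 3 := by
        calc x m = x m ^ 1 := (pow_one _).symm
          _ ≤ x m ^ 3 := pow_le_pow_right₀ hx1 (by norm_num)
      linarith
    have hclosed : IsClosed Γ := by
      rw [hΓ]
      have : {x : Fin N → ℝ | (∀ m, 0 ≤ x m) ∧
          ∀ j : Fin n, ∑ m, x m ^ (2 * (j : ℕ) + 3) = α j}
          = (⋂ m, {x : Fin N → ℝ | 0 ≤ x m}) ∩
            ⋂ j : Fin n, {x : Fin N → ℝ | ∑ m, x m ^ (2 * (j : ℕ) + 3) = α j} := by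
        ext x; simp [Set.mem_iInter]
      rw [this]
      refine IsClosed.inter (isClosed_iInter fun m => ?_) (isClosed_iInter fun j => ?_)
      · exact isClosed_le continuous_const (continuous_apply m)
      · exact isClosed_eq (continuous_finset_sum _ fun m _ => (continuous_apply m).pow _)
          continuous_const
    have hcomp : IsCompact Γ :=
      (isCompact_univ_pi fun _ => isCompact_Icc).of_isClosed_subset hclosed hsub
    have hcont : ContinuousOn f Γ :=
      (continuous_const.mul (continuous_finset_sum _ fun m _ =>
        (continuous_apply m).pow _)).continuousOn
    obtain ⟨β, hβΓ, hβmin⟩ := hcomp.exists_isMinOn hne hcont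
    exact ⟨β, hβΓ, fun x hx => hβmin hx⟩
  · -- Part (ii)
    intro β hβΓ hβmin
    by_contra hcard
    push_neg at hcard
    rw [hΓ] at hβΓ
    obtain ⟨hβ0, hβc⟩ := hβΓ
    -- extract n+1 distinct nonzero values
    set S : Set ℝ := Set.range β \ {0} with hS
    have hSfin : S.Finite := (Set.finite_range β).diff
    have hcard' : n + 1 ≤ hSfin.toFinset.card := by
      rw [Set.ncard_eq_toFinset_card S hSfin] at hcard
      omega
    obtain ⟨T', hT'sub, hT'card⟩ := Finset.exists_subset_card_eq hcard'
    set v : Fin (n+1) → ℝ := fun i => (T'.orderIsoOfFin hT'card i : ℝ) with hv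
    have hvinj : Function.Injective v := fun a b hab => by
      have := Subtype.ext hab
      exact (T'.orderIsoOfFin hT'card).injective this
    have hvS : ∀ i, v i ∈ S := fun i =>
      hSfin.mem_toFinset.1 (hT'sub (T'.orderIsoOfFin hT'card i).2)
    have hvmem : ∀ i, ∃ m, β m = v i := fun i => (hvS i).1
    choose m hm using hvmem
    have hminj : Function.Injective m := fun a b hab => hvinj (by rw [← hm a, ← hm b, hab])
    have hvpos : ∀ i, 0 < v i := fun i =>
      lt_of_le_of_ne (hm i ▸ hβ0 (m i)) (fun h => (hvS i).2 h.symm)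
    -- the sum-splitting machinery
    set T : Finset (Fin N) := Finset.image m Finset.univ with hT
    set minv : Fin N → Fin (n+1) := Function.invFun m with hminv
    have hli : Function.LeftInverse minv m := Function.leftInverse_invFun hminj
    set y : (Fin (n+1) → ℝ) → Fin N → ℝ :=
      fun x m' => if m' ∈ T then x (minv m') else β m' with hy
    have hsplit : ∀ (k : ℕ) (x : Fin (n+1) → ℝ),
        ∑ m', y x m' ^ k = (∑ m' ∈ Tᶜ, β m' ^ k) + ∑ i, x i ^ k := by
      intro k x
      rw [← Finset.sum_compl_add_sum T]
      congr 1
      · exact Finset.sum_congr rfl fun m' hm' => by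
          rw [hy]; simp only [if_neg (Finset.mem_compl.1 hm')]
      · rw [hT, Finset.sum_image (fun a _ b _ h => hminj h)]
        exact Finset.sum_congr rfl fun i _ => by
          rw [hy]
          simp only [if_pos (show m i ∈ T from Finset.mem_image_of_mem m (Finset.mem_univ i)), hli i]
    have hsplitβ : ∀ k : ℕ,
        ∑ m', β m' ^ k = (∑ m' ∈ Tᶜ, β m' ^ k) + ∑ i, v i ^ k := by
      intro k
      rw [← Finset.sum_compl_add_sum T]
      congr 1
      rw [hT, Finset.sum_image (fun a _ b _ h => hminj h)]
      exact Finset.sum_congr rfl fun i _ => by rw [hm i]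
    -- inverse function theorem
    set g : (Fin (n+1) → ℝ) → (Fin (n+1) → ℝ) :=
      fun x j => ∑ i, x i ^ (2*(j:ℕ)+3) with hg
    have hmap : Filter.map g (𝓝 v) = 𝓝 (g v) := map_nhds_g n v (det_A_ne n v hvpos hvinj)
    set U : Set (Fin (n+1) → ℝ) := {x | ∀ i, 0 < x i} with hU
    have hUopen : IsOpen U := by
      have : U = ⋂ i, (fun x : Fin (n+1) → ℝ => x i) ⁻¹' Set.Ioi 0 := by
        ext x; simp [hU, Set.mem_iInter]
      rw [this]
      exact isOpen_iInter_of_finite fun i => (continuous_apply i).isOpen_preimage _ isOpen_Ioi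
    have hUnhds : U ∈ 𝓝 v := hUopen.mem_nhds (fun i => hvpos i)
    have himg : g '' U ∈ 𝓝 (g v) := by
      rw [← hmap]; exact Filter.image_mem_map hUnhds
    -- perturbed targets
    set p : ℝ → (Fin (n+1) → ℝ) :=
      fun ε => Function.update (g v) (Fin.last n) (g v (Fin.last n) - (-1:ℝ)^n * ε) with hp
    have hptend : Filter.Tendsto p (𝓝[>] (0:ℝ)) (𝓝 (g v)) := by
      have hc : Continuous p := by
        apply continuous_pi
        intro j
        by_cases hj : j = Fin.last n
        · subst hj
          simp only [hp, Function.update_self]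
          fun_prop
        · simp only [hp, Function.update_of_ne hj]
          exact continuous_const
      have h0 : p 0 = g v := by
        simp [hp, Function.update_eq_self_iff]
      have := hc.tendsto 0
      rw [h0] at this
      exact this.mono_left nhdsWithin_le_nhds
    have hev : ∀ᶠ ε in 𝓝[>] (0:ℝ), p ε ∈ g '' U ∧ 0 < ε :=
      (hptend.eventually_mem himg).and (eventually_mem_nhdsWithin)
    obtain ⟨ε, ⟨⟨x, hxU, hgx⟩, hεpos⟩⟩ := hev.exists
    -- the competitor point
    have hyΓ : y x ∈ Γ := by
      rw [hΓ]
      constructor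
      · intro m'
        rw [hy]
        by_cases hmem : m' ∈ T
        · simp only [if_pos hmem]; exact (hxU (minv m')).le
        · simp only [if_neg hmem]; exact hβ0 m'
      · intro j
        have h1 := hsplit (2*(j:ℕ)+3) x
        have h2 := hsplitβ (2*(j:ℕ)+3)
        have h3 : (∑ i, x i ^ (2*(j:ℕ)+3)) = ∑ i, v i ^ (2*(j:ℕ)+3) := by
          have hcs : g x (Fin.castSucc j) = g v (Fin.castSucc j) := by
            rw [hgx]
            simp only [hp]
            rw [Function.update_of_ne (Fin.castSucc_lt_last j).ne]
          simpa [hg, Fin.coe_castSucc] using hcs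
        rw [h1, h3, ← h2]
        exact hβc j
    -- energy comparison
    have hen : ∑ m', y x m' ^ (2*n+3)
        = (∑ m', β m' ^ (2*n+3)) - (-1:ℝ)^n * ε := by
      have h1 := hsplit (2*n+3) x
      have h2 := hsplitβ (2*n+3)
      have h3 : (∑ i, x i ^ (2*n+3)) = (∑ i, v i ^ (2*n+3)) - (-1:ℝ)^n * ε := by
        have hcs : g x (Fin.last n) = g v (Fin.last n) - (-1:ℝ)^n * ε := by
          rw [hgx]
          simp only [hp]
          rw [Function.update_self]
        simpa [hg, Fin.val_last] using hcs
      rw [h1, h3, h2]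
      ring
    have hsq : ((-1:ℝ)^n) * ((-1:ℝ)^n) = 1 := by
      rw [← pow_add, ← two_mul, pow_mul]
      norm_num
    have hlt : (-1:ℝ)^n * ∑ m', y x m' ^ (2*n+3)
        < (-1:ℝ)^n * ∑ m', β m' ^ (2*n+3) := by
      rw [hen]
      have : (-1:ℝ)^n * ((∑ m', β m' ^ (2*n+3)) - (-1:ℝ)^n * ε)
          = (-1:ℝ)^n * (∑ m', β m' ^ (2*n+3)) - ε := by
        rw [mul_sub, ← mul_assoc, hsq, one_mul]
      rw [this]
      linarith
    exact absurd (hβmin (y x) hyΓ) (not_le.2 hlt)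
end

section
/- Fix an integer N ≥ 2 and real numbers e_1, e_2. There exist an integer M with 0 ≤ M ≤ N and distinct positive reals β_1 > ⋯ > β_M > 0 such that (8/3) Σ_{m=1}^{M} β_m^3 = e_1 and −(32/5) Σ_{m=1}^{M} β_m^5 = e_2 if and only if either (e_1, e_2) = (0, 0), or e_1 > 0 and −(32/5)(3/8)^{5/3} e_1^{5/3} ≤ e_2 < −N^{−2/3}(32/5)(3/8)^{5/3} e_1^{5/3}. -/
open Finset Real

-- upper bound: t ≤ s^(5/3)
lemma upper {M : ℕ} (β : Fin M → ℝ) (hpos : ∀ i, 0 < β i) :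
    ∑ m, β m ^ 5 ≤ (∑ m, β m ^ 3) ^ ((5:ℝ)/3) := by
  set s := ∑ m, β m ^ 3 with hs
  have hterm : ∀ i : Fin M, (0:ℝ) ≤ β i ^ 3 := fun i => pow_nonneg (hpos i).le 3
  have hle : ∀ i : Fin M, β i ^ 3 ≤ s := fun i =>
    Finset.single_le_sum (fun j _ => hterm j) (Finset.mem_univ i)
  have hs0 : 0 ≤ s := Finset.sum_nonneg fun i _ => hterm i
  have key : ∀ i : Fin M, β i ^ 5 ≤ β i ^ 3 * s ^ ((2:ℝ)/3) := by
    intro i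
    have h2 : β i ^ 2 = (β i ^ 3 : ℝ) ^ ((2:ℝ)/3) := by
      rw [← Real.rpow_natCast (β i) 3, ← Real.rpow_mul (hpos i).le,
        ← Real.rpow_natCast (β i) 2]
      norm_num
    have h5 : β i ^ 5 = β i ^ 3 * β i ^ 2 := by ring
    rw [h5, h2]
    have := Real.rpow_le_rpow (hterm i) (hle i) (by norm_num : (0:ℝ) ≤ 2/3)
    exact mul_le_mul_of_nonneg_left this (hterm i)
  calc ∑ m, β m ^ 5 ≤ ∑ m, β m ^ 3 * s ^ ((2:ℝ)/3) :=
        Finset.sum_le_sum fun i _ => key i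
    _ = s * s ^ ((2:ℝ)/3) := by rw [← Finset.sum_mul]
    _ = s ^ ((5:ℝ)/3) := by
        rcases eq_or_lt_of_le hs0 with h | h
        · rw [← h]; rw [Real.zero_rpow (by norm_num), Real.zero_rpow (by norm_num), zero_mul]
        · nth_rewrite 1 [← Real.rpow_one s]
          rw [← Real.rpow_add h]; norm_num

-- lower bound: s^(5/3) < N^(2/3) * t, for 1 ≤ M ≤ N
lemma lower {M N : ℕ} (hM : 1 ≤ M) (hMN : M ≤ N) (hN : 2 ≤ N) (β : Fin M → ℝ)
    (hanti : StrictAnti β) (hpos : ∀ i, 0 < β i) :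
    (∑ m, β m ^ 3) ^ ((5:ℝ)/3) < (N:ℝ) ^ ((2:ℝ)/3) * ∑ m, β m ^ 5 := by
  obtain ⟨s, hs⟩ : ∃ s, s = ∑ m, β m ^ 3 := ⟨_, rfl⟩
  obtain ⟨t, ht⟩ : ∃ t, t = ∑ m, β m ^ 5 := ⟨_, rfl⟩
  rw [← hs, ← ht]
  have hterm : ∀ i : Fin M, (0:ℝ) ≤ β i ^ 3 := fun i => pow_nonneg (hpos i).le 3
  have hspos : 0 < s := by
    have : (0:ℝ) < β ⟨0, hM⟩ ^ 3 := pow_pos (hpos _) 3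
    rw [hs]
    exact Finset.sum_pos (fun i _ => pow_pos (hpos i) 3) ⟨⟨0, hM⟩, Finset.mem_univ _⟩
  have htpos : 0 < t := by
    rw [ht]
    exact Finset.sum_pos (fun i _ => pow_pos (hpos i) 5) ⟨⟨0, hM⟩, Finset.mem_univ _⟩
  have h53 : ∀ i : Fin M, (β i ^ 3 : ℝ) ^ ((5:ℝ)/3) = β i ^ 5 := by
    intro i
    rw [← Real.rpow_natCast (β i) 3, ← Real.rpow_mul (hpos i).le,
      ← Real.rpow_natCast (β i) 5]
    norm_num
  rcases eq_or_lt_of_le hM with h1 | h2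
  · -- M = 1
    have heq : s ^ ((5:ℝ)/3) = t := by
      subst h1
      rw [hs, ht, Fin.sum_univ_one, Fin.sum_univ_one, h53]
    rw [heq]
    nth_rewrite 1 [← one_mul t]
    apply mul_lt_mul_of_pos_right _ htpos
    rw [← Real.one_rpow ((2:ℝ)/3)]
    apply Real.rpow_lt_rpow (by norm_num) _ (by norm_num)
    exact_mod_cast (by omega : 1 < N)
  -- M ≥ 2 : strict Jensen
  have key : s ^ ((5:ℝ)/3) < (M:ℝ) ^ ((2:ℝ)/3) * t := by
      have hM0 : (0:ℝ) < M := by exact_mod_cast hM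
      have jensen := (strictConvexOn_rpow (by norm_num : (1:ℝ) < 5/3)).map_sum_lt
        (t := (Finset.univ : Finset (Fin M))) (w := fun _ => (M:ℝ)⁻¹) (p := fun i => β i ^ 3)
        (fun i _ => by positivity)
        (by simp [Finset.card_univ]; field_simp)
        (fun i _ => hterm i)
        ⟨⟨0, by omega⟩, Finset.mem_univ _, ⟨1, by omega⟩, Finset.mem_univ _, by
          have : β ⟨1, by omega⟩ < β ⟨0, by omega⟩ := hanti (by simp [Fin.lt_def])
          have := pow_lt_pow_left₀ this (hpos _).le (n := 3) (by norm_num)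
          exact ne_of_gt this⟩
      simp only [smul_eq_mul, ← Finset.mul_sum, h53] at jensen
      rw [← hs, ← ht] at jensen
      -- jensen : (M⁻¹ * s) ^ (5/3) < M⁻¹ * t
      have hMs : ((M:ℝ)⁻¹ * s) ^ ((5:ℝ)/3) = (M:ℝ)⁻¹ ^ ((5:ℝ)/3) * s ^ ((5:ℝ)/3) :=
        Real.mul_rpow (by positivity) hspos.le
      rw [hMs] at jensen
      have h1 : (M:ℝ) ^ ((5:ℝ)/3) * ((M:ℝ)⁻¹ ^ ((5:ℝ)/3) * s ^ ((5:ℝ)/3)) = s ^ ((5:ℝ)/3) := by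
        rw [← mul_assoc, ← Real.mul_rpow hM0.le (by positivity)]
        rw [mul_inv_cancel₀ (ne_of_gt hM0), Real.one_rpow, one_mul]
      have h2' : (M:ℝ) ^ ((5:ℝ)/3) * ((M:ℝ)⁻¹ * t) = (M:ℝ) ^ ((2:ℝ)/3) * t := by
        have : (M:ℝ) ^ ((5:ℝ)/3) = (M:ℝ) ^ ((2:ℝ)/3) * (M:ℝ) := by
          nth_rewrite 3 [← Real.rpow_one (M:ℝ)]
          rw [← Real.rpow_add hM0]; norm_num
        rw [this]; field_simp
      calc s ^ ((5:ℝ)/3) = (M:ℝ) ^ ((5:ℝ)/3) * ((M:ℝ)⁻¹ ^ ((5:ℝ)/3) * s ^ ((5:ℝ)/3)) := h1.symm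
        _ < (M:ℝ) ^ ((5:ℝ)/3) * ((M:ℝ)⁻¹ * t) := by
            apply mul_lt_mul_of_pos_left jensen (by positivity)
        _ = (M:ℝ) ^ ((2:ℝ)/3) * t := h2'
  calc s ^ ((5:ℝ)/3) < (M:ℝ) ^ ((2:ℝ)/3) * t := key
    _ ≤ (N:ℝ) ^ ((2:ℝ)/3) * t := by
        apply mul_le_mul_of_nonneg_right _ htpos.le
        exact Real.rpow_le_rpow (by positivity) (by exact_mod_cast hMN) (by norm_num)

lemma construct (N : ℕ) (hN : 2 ≤ N) (s τ : ℝ) (hs : 0 < s)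
    (h1 : (N:ℝ) ^ (-(2/3) : ℝ) * s ^ ((5:ℝ)/3) < τ) (h2 : τ ≤ s ^ ((5:ℝ)/3)) :
    ∃ M ≤ N, ∃ β : Fin M → ℝ, StrictAnti β ∧ (∀ i, 0 < β i) ∧
      ∑ m, β m ^ 3 = s ∧ ∑ m, β m ^ 5 = τ := by
  have hNpos : (0:ℝ) < N := by positivity
  have hs53 : (0:ℝ) < s ^ ((5:ℝ)/3) := Real.rpow_pos_of_pos hs _
  rcases eq_or_lt_of_le h2 with heq | hlt
  · -- τ = s^(5/3) : single soliton
    refine ⟨1, by omega, fun _ => s ^ ((1:ℝ)/3), Subsingleton.strictAnti _, 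
      fun _ => Real.rpow_pos_of_pos hs _, ?_, ?_⟩
    · rw [Fin.sum_univ_one, ← Real.rpow_natCast (s ^ ((1:ℝ)/3)) 3,
        ← Real.rpow_mul hs.le]
      norm_num
    · rw [Fin.sum_univ_one, ← Real.rpow_natCast (s ^ ((1:ℝ)/3)) 5,
        ← Real.rpow_mul hs.le, heq]
      norm_num
  · -- τ < s^(5/3) : use N solitons with geometric profile, IVT
    set A3 : ℝ → ℝ := fun l => ∑ i : Fin N, (l ^ (i:ℕ)) ^ 3 with hA3def
    set A5 : ℝ → ℝ := fun l => ∑ i : Fin N, (l ^ (i:ℕ)) ^ 5 with hA5def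
    have hA3cont : Continuous A3 := by
      apply continuous_finset_sum; intro i _; continuity
    have hA5cont : Continuous A5 := by
      apply continuous_finset_sum; intro i _; continuity
    haveI : NeZero N := ⟨by omega⟩
    have hA3pos : ∀ l : ℝ, 0 ≤ l → (1:ℝ) ≤ A3 l := by
      intro l hl
      have h0 : ((l ^ ((0 : Fin N):ℕ)) ^ 3 : ℝ) = 1 := by simp
      calc (1:ℝ) = (l ^ ((0 : Fin N):ℕ)) ^ 3 := h0.symm
        _ ≤ A3 l := Finset.single_le_sum (f := fun i : Fin N => (l ^ (i:ℕ)) ^ 3)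
            (fun i _ => by positivity) (Finset.mem_univ (0 : Fin N))
    set f : ℝ → ℝ := fun l => A5 l / (A3 l) ^ ((5:ℝ)/3) with hfdef
    have hfcont : ContinuousOn f (Set.Icc 0 1) := by
      apply ContinuousOn.div hA5cont.continuousOn
      · exact hA3cont.continuousOn.rpow_const fun x _ => Or.inr (by norm_num)
      · intro x hx
        have := hA3pos x hx.1
        positivity
    have hsum0 : ∀ k : ℕ, k ≠ 0 → ∑ i : Fin N, ((0:ℝ) ^ (i:ℕ)) ^ k = 1 := by
      intro k hk
      rw [Finset.sum_eq_single_of_mem (0 : Fin N) (Finset.mem_univ _)]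
      · simp
      · intro i _ hi
        have hiv : (i:ℕ) ≠ 0 := fun h => hi (Fin.ext (by simpa using h))
        rw [zero_pow hiv, zero_pow hk]
    have hf0 : f 0 = 1 := by
      have h3 := hsum0 3 (by norm_num)
      have h5 := hsum0 5 (by norm_num)
      simp only [hfdef, hA3def, hA5def, h3, h5, Real.one_rpow, div_one]
    have hf1 : f 1 = (N:ℝ) ^ (-(2/3) : ℝ) := by
      have h3 : A3 1 = N := by simp [hA3def]
      have h5 : A5 1 = N := by simp [hA5def]
      simp only [hfdef, h3, h5]
      rw [show ((N:ℝ)) / (N:ℝ) ^ ((5:ℝ)/3) = (N:ℝ) ^ (1:ℝ) / (N:ℝ) ^ ((5:ℝ)/3) by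
        rw [Real.rpow_one], ← Real.rpow_sub hNpos]
      norm_num
    set ρ : ℝ := τ / s ^ ((5:ℝ)/3) with hρdef
    have hρ1 : ρ < 1 := (div_lt_one hs53).mpr hlt
    have hρN : (N:ℝ) ^ (-(2/3) : ℝ) < ρ := by
      rw [hρdef, lt_div_iff₀ hs53]
      exact h1
    have hmem : ρ ∈ Set.Icc (f 1) (f 0) := by
      rw [hf0, hf1]
      exact ⟨hρN.le, hρ1.le⟩
    obtain ⟨l, hl, hfl⟩ := intermediate_value_Icc' (by norm_num : (0:ℝ) ≤ 1) hfcont hmem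
    have hl0 : 0 < l := by
      rcases eq_or_lt_of_le hl.1 with h | h
      · exfalso; rw [← h] at hfl; rw [hf0] at hfl; linarith [hfl ▸ hρ1]
      · exact h
    have hl1 : l < 1 := by
      rcases eq_or_lt_of_le hl.2 with h | h
      · exfalso; rw [h] at hfl; rw [hf1] at hfl; linarith [hfl ▸ hρN]
      · exact h
    have hA3p : (0:ℝ) < A3 l := lt_of_lt_of_le one_pos (hA3pos l hl0.le)
    set c : ℝ := (s / A3 l) ^ ((1:ℝ)/3) with hcdef
    have hcpos : 0 < c := Real.rpow_pos_of_pos (by positivity) _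
    have hc3 : c ^ 3 = s / A3 l := by
      rw [hcdef, ← Real.rpow_natCast ((s / A3 l) ^ ((1:ℝ)/3)) 3,
        ← Real.rpow_mul (by positivity)]
      norm_num
    have hc5 : c ^ 5 = (s / A3 l) ^ ((5:ℝ)/3) := by
      rw [hcdef, ← Real.rpow_natCast ((s / A3 l) ^ ((1:ℝ)/3)) 5,
        ← Real.rpow_mul (by positivity)]
      norm_num
    refine ⟨N, le_refl N, fun i => c * l ^ (i:ℕ), ?_, ?_, ?_, ?_⟩
    · intro i j hij
      exact mul_lt_mul_of_pos_left
        (pow_lt_pow_right_of_lt_one₀ hl0 hl1 hij) hcpos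
    · intro i; positivity
    · have : ∑ m : Fin N, (c * l ^ (m:ℕ)) ^ 3 = c ^ 3 * A3 l := by
        rw [hA3def, Finset.mul_sum]
        congr 1; ext i; ring
      rw [this, hc3, div_mul_cancel₀ _ (ne_of_gt hA3p)]
    · have hstep : ∑ m : Fin N, (c * l ^ (m:ℕ)) ^ 5 = c ^ 5 * A5 l := by
        rw [hA5def, Finset.mul_sum]
        congr 1; ext i; ring
      rw [hstep, hc5, Real.div_rpow hs.le hA3p.le]
      have : s ^ ((5:ℝ)/3) / A3 l ^ ((5:ℝ)/3) * A5 l = s ^ ((5:ℝ)/3) * f l := by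
        rw [hfdef]; ring
      rw [this, hfl, hρdef]
      field_simp


/-- **Description of the set `𝓜²_N` of constraints attainable by multisolitons of
degree at most `N`.**  For `N ≥ 2` and reals `e₁, e₂`: there exist `M ≤ N` and strictly
decreasing positive reals `β_1 > ⋯ > β_M > 0` with `(8/3) ∑ β_m³ = e₁` and
`-(32/5) ∑ β_m⁵ = e₂` if and only if `(e₁, e₂) = (0, 0)`, or `e₁ > 0` and
`-(32/5)(3/8)^{5/3} e₁^{5/3} ≤ e₂ < -N^{-2/3} (32/5)(3/8)^{5/3} e₁^{5/3}`. -/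
theorem stmt_12 (N : ℕ) (hN : 2 ≤ N) (e₁ e₂ : ℝ) :
    (∃ M ≤ N, ∃ β : Fin M → ℝ, StrictAnti β ∧ (∀ i, 0 < β i) ∧
      (8 / 3 : ℝ) * ∑ m, β m ^ 3 = e₁ ∧ -(32 / 5 : ℝ) * ∑ m, β m ^ 5 = e₂) ↔
    ((e₁ = 0 ∧ e₂ = 0) ∨
      (0 < e₁ ∧
        -(32 / 5 : ℝ) * (3 / 8 : ℝ) ^ ((5 : ℝ) / 3) * e₁ ^ ((5 : ℝ) / 3) ≤ e₂ ∧
        e₂ < -((N : ℝ) ^ (-(2 / 3) : ℝ)) * (32 / 5) * (3 / 8 : ℝ) ^ ((5 : ℝ) / 3) *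
          e₁ ^ ((5 : ℝ) / 3))) := by
  have hNpos : (0:ℝ) < N := by positivity
  constructor
  · rintro ⟨M, hMN, β, hanti, hpos, he1, he2⟩
    rcases Nat.eq_zero_or_pos M with rfl | hM
    · left
      constructor
      · rw [← he1]; simp
      · rw [← he2]; simp
    · right
      obtain ⟨s, hs⟩ : ∃ s, s = ∑ m, β m ^ 3 := ⟨_, rfl⟩
      obtain ⟨t, ht⟩ : ∃ t, t = ∑ m, β m ^ 5 := ⟨_, rfl⟩
      rw [← hs] at he1
      rw [← ht] at he2
      have hspos : 0 < s := by
        rw [hs]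
        exact Finset.sum_pos (fun i _ => pow_pos (hpos i) 3) ⟨⟨0, hM⟩, Finset.mem_univ _⟩
      have hup : t ≤ s ^ ((5:ℝ)/3) := by rw [hs, ht]; exact upper β hpos
      have hlow : s ^ ((5:ℝ)/3) < (N:ℝ) ^ ((2:ℝ)/3) * t := by
        rw [hs, ht]; exact lower hM hMN hN β hanti hpos
      have hs53 : (0:ℝ) < s ^ ((5:ℝ)/3) := Real.rpow_pos_of_pos hspos _
      have hE : e₁ ^ ((5:ℝ)/3) = (8/3 : ℝ) ^ ((5:ℝ)/3) * s ^ ((5:ℝ)/3) := by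
        rw [← he1, Real.mul_rpow (by norm_num) hspos.le]
      have hK : (3/8 : ℝ) ^ ((5:ℝ)/3) * ((8/3 : ℝ) ^ ((5:ℝ)/3) * s ^ ((5:ℝ)/3))
          = s ^ ((5:ℝ)/3) := by
        rw [← mul_assoc, ← Real.mul_rpow (by norm_num) (by norm_num)]
        norm_num
      have hNN : (N:ℝ) ^ (-(2/3) : ℝ) * (N:ℝ) ^ ((2:ℝ)/3) = 1 := by
        rw [← Real.rpow_add hNpos]; norm_num
      have hNrpos : (0:ℝ) < (N:ℝ) ^ (-(2/3) : ℝ) := Real.rpow_pos_of_pos hNpos _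
      have hlow' : (N:ℝ) ^ (-(2/3) : ℝ) * s ^ ((5:ℝ)/3) < t := by
        calc (N:ℝ) ^ (-(2/3) : ℝ) * s ^ ((5:ℝ)/3)
            < (N:ℝ) ^ (-(2/3) : ℝ) * ((N:ℝ) ^ ((2:ℝ)/3) * t) :=
              mul_lt_mul_of_pos_left hlow hNrpos
          _ = t := by rw [← mul_assoc, hNN, one_mul]
      refine ⟨by rw [← he1]; positivity, ?_, ?_⟩
      · have : -(32/5 : ℝ) * (3/8 : ℝ) ^ ((5:ℝ)/3) * e₁ ^ ((5:ℝ)/3)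
            = -(32/5 : ℝ) * s ^ ((5:ℝ)/3) := by
          rw [hE, mul_assoc, hK]
        rw [this, ← he2]
        linarith
      · have : -((N:ℝ) ^ (-(2/3) : ℝ)) * (32/5) * (3/8 : ℝ) ^ ((5:ℝ)/3) * e₁ ^ ((5:ℝ)/3)
            = -(32/5 : ℝ) * ((N:ℝ) ^ (-(2/3) : ℝ) * s ^ ((5:ℝ)/3)) := by
          rw [hE, mul_assoc, hK]
          ring
        rw [this, ← he2]
        linarith
  · rintro (⟨h1, h2⟩ | ⟨he1pos, hle, hlt⟩)
    · refine ⟨0, Nat.zero_le N, Fin.elim0, fun i => i.elim0, fun i => i.elim0, ?_, ?_⟩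
      · rw [h1]; simp
      · rw [h2]; simp
    · set s : ℝ := (3/8) * e₁ with hsdef
      set τ : ℝ := -(5/32) * e₂ with hτdef
      have hspos : 0 < s := by rw [hsdef]; linarith
      have hs53eq : s ^ ((5:ℝ)/3) = (3/8 : ℝ) ^ ((5:ℝ)/3) * e₁ ^ ((5:ℝ)/3) := by
        rw [hsdef, Real.mul_rpow (by norm_num) he1pos.le]
      have hτ2 : τ ≤ s ^ ((5:ℝ)/3) := by
        rw [hs53eq, hτdef]
        nlinarith [hle]
      have hτ1 : (N:ℝ) ^ (-(2/3) : ℝ) * s ^ ((5:ℝ)/3) < τ := by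
        have h : e₂ < -(32/5 : ℝ) * ((N:ℝ) ^ (-(2/3) : ℝ) * s ^ ((5:ℝ)/3)) := by
          have heq : -((N:ℝ) ^ (-(2/3) : ℝ)) * (32/5) * (3/8 : ℝ) ^ ((5:ℝ)/3) *
              e₁ ^ ((5:ℝ)/3) = -(32/5 : ℝ) * ((N:ℝ) ^ (-(2/3) : ℝ) * s ^ ((5:ℝ)/3)) := by
            rw [hs53eq]; ring
          rw [← heq]; exact hlt
        rw [hτdef]; linarith
      obtain ⟨M, hMN, β, hanti, hpos, hsum3, hsum5⟩ := construct N hN s τ hspos hτ1 hτ2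
      refine ⟨M, hMN, β, hanti, hpos, ?_, ?_⟩
      · rw [hsum3, hsdef]; ring
      · rw [hsum5, hτdef]; ring
end

section
/- Let e_1, e_2 be real numbers. There exist an integer N ≥ 0 and distinct positive reals β_1 > ⋯ > β_N > 0 such that (8/3) Σ_{m=1}^{N} β_m^3 = e_1 and −(32/5) Σ_{m=1}^{N} β_m^5 = e_2 if and only if either (e_1, e_2) = (0, 0), or e_1 > 0 and −(32/5)(3/8)^{5/3} e_1^{5/3} ≤ e_2 < 0. -/
open Real Finset

private lemma aux_add_rpow {x y p : ℝ} (hx : 0 ≤ x) (hy : 0 ≤ y) (hp : 1 ≤ p) :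
    x ^ p + y ^ p ≤ (x + y) ^ p := by
  lift x to NNReal using hx
  lift y to NNReal using hy
  exact_mod_cast NNReal.add_rpow_le_rpow_add x y hp

private lemma aux_sum_rpow {ι : Type*} (a : ι → ℝ) (ha : ∀ i, 0 ≤ a i) {p : ℝ} (hp : 1 ≤ p)
    (s : Finset ι) : ∑ i ∈ s, a i ^ p ≤ (∑ i ∈ s, a i) ^ p := by
  classical
  induction s using Finset.cons_induction with
  | empty => simp [Real.zero_rpow (by linarith : p ≠ 0)]
  | cons i s his ih =>
    rw [Finset.sum_cons, Finset.sum_cons]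
    calc a i ^ p + ∑ j ∈ s, a j ^ p ≤ a i ^ p + (∑ j ∈ s, a j) ^ p := by linarith
      _ ≤ (a i + ∑ j ∈ s, a j) ^ p :=
        aux_add_rpow (ha i) (Finset.sum_nonneg fun j _ => ha j) hp

/-- **Description of the union `⋃_N 𝓜²_N` of constraints attainable by multisolitons.**
For reals `e₁, e₂`: there exist `N ≥ 0` and strictly decreasing positive reals
`β_1 > ⋯ > β_N > 0` with `(8/3) ∑ β_m³ = e₁` and `-(32/5) ∑ β_m⁵ = e₂` if and only if
`(e₁, e₂) = (0, 0)`, or `e₁ > 0` and `-(32/5)(3/8)^{5/3} e₁^{5/3} ≤ e₂ < 0`. -/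
theorem stmt_13 (e₁ e₂ : ℝ) :
    (∃ N : ℕ, ∃ β : Fin N → ℝ, StrictAnti β ∧ (∀ i, 0 < β i) ∧
      (8 / 3 : ℝ) * ∑ m, β m ^ 3 = e₁ ∧ -(32 / 5 : ℝ) * ∑ m, β m ^ 5 = e₂) ↔
    ((e₁ = 0 ∧ e₂ = 0) ∨
      (0 < e₁ ∧
        -(32 / 5 : ℝ) * (3 / 8 : ℝ) ^ ((5 : ℝ) / 3) * e₁ ^ ((5 : ℝ) / 3) ≤ e₂ ∧
        e₂ < 0)) := by
  constructor
  · rintro ⟨N, β, hanti, hpos, he₁, he₂⟩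
    rcases Nat.eq_zero_or_pos N with rfl | hN
    · left
      simp at he₁ he₂
      exact ⟨he₁.symm, by linarith⟩
    · right
      set S3 := ∑ m, β m ^ 3 with hS3
      set S5 := ∑ m, β m ^ 5 with hS5
      have hS3pos : 0 < S3 :=
        Finset.sum_pos (fun i _ => pow_pos (hpos i) 3) ⟨⟨0, hN⟩, Finset.mem_univ _⟩
      have hS5pos : 0 < S5 :=
        Finset.sum_pos (fun i _ => pow_pos (hpos i) 5) ⟨⟨0, hN⟩, Finset.mem_univ _⟩
      have he₁pos : 0 < e₁ := by rw [← he₁]; positivity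
      have he₂neg : e₂ < 0 := by rw [← he₂]; nlinarith
      refine ⟨he₁pos, ?_, he₂neg⟩
      -- key: S5 ≤ S3 ^ (5/3)
      have key : S5 ≤ S3 ^ ((5 : ℝ) / 3) := by
        have h1 : ∀ i, β i ^ 5 = (β i ^ 3) ^ ((5 : ℝ) / 3) := by
          intro i
          rw [← Real.rpow_natCast (β i) 3, ← Real.rpow_natCast (β i) 5,
            ← Real.rpow_mul (hpos i).le]
          norm_num
        rw [hS5, hS3]
        calc ∑ m, β m ^ 5 = ∑ m, (β m ^ 3) ^ ((5:ℝ)/3) := by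
              exact Finset.sum_congr rfl fun i _ => h1 i
          _ ≤ (∑ m, β m ^ 3) ^ ((5:ℝ)/3) :=
              aux_sum_rpow (fun i => β i ^ 3) (fun i => pow_nonneg (hpos i).le 3) (by norm_num) _
      -- rewrite the bound
      have he₁' : e₁ ^ ((5:ℝ)/3) = (8/3 : ℝ) ^ ((5:ℝ)/3) * S3 ^ ((5:ℝ)/3) := by
        rw [← he₁, Real.mul_rpow (by norm_num) hS3pos.le]
      have hcoef : (3/8 : ℝ) ^ ((5:ℝ)/3) * (8/3 : ℝ) ^ ((5:ℝ)/3) = 1 := by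
        rw [← Real.mul_rpow (by norm_num) (by norm_num)]
        norm_num
      rw [← he₂, he₁']
      calc -(32/5 : ℝ) * (3/8 : ℝ) ^ ((5:ℝ)/3) * ((8/3 : ℝ) ^ ((5:ℝ)/3) * S3 ^ ((5:ℝ)/3))
          = -(32/5 : ℝ) * (((3/8 : ℝ) ^ ((5:ℝ)/3) * (8/3 : ℝ) ^ ((5:ℝ)/3)) * S3 ^ ((5:ℝ)/3)) := by
            ring
        _ = -(32/5 : ℝ) * S3 ^ ((5:ℝ)/3) := by rw [hcoef]; ring
        _ ≤ -(32/5 : ℝ) * S5 := by nlinarith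
  · rintro (⟨rfl, rfl⟩ | ⟨he₁, hlb, he₂⟩)
    · exact ⟨0, fun i => i.elim0, fun a => a.elim0, fun i => i.elim0, by simp, by simp⟩
    · set s₃ : ℝ := 3/8 * e₁ with hs₃def
      set s₅ : ℝ := -(5/32) * e₂ with hs₅def
      have hs₃ : 0 < s₃ := by positivity
      have hs₅ : 0 < s₅ := by rw [hs₅def]; nlinarith
      have hs₃e : (8/3 : ℝ) * s₃ = e₁ := by rw [hs₃def]; ring
      have hs₅e : -(32/5 : ℝ) * s₅ = e₂ := by rw [hs₅def]; ring
      have hub : s₅ ≤ s₃ ^ ((5:ℝ)/3) := by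
        have h1 : s₃ ^ ((5:ℝ)/3) = (3/8 : ℝ) ^ ((5:ℝ)/3) * e₁ ^ ((5:ℝ)/3) := by
          rw [hs₃def, Real.mul_rpow (by norm_num) he₁.le]
        rw [h1, hs₅def]
        nlinarith
      rcases eq_or_lt_of_le hub with heq | hlt
      · -- single soliton
        refine ⟨1, fun _ => s₃ ^ ((1:ℝ)/3), ?_, ?_, ?_, ?_⟩
        · intro a b h
          exact absurd (Subsingleton.elim a b) (ne_of_lt h)
        · intro i; exact Real.rpow_pos_of_pos hs₃ _
        · have : (s₃ ^ ((1:ℝ)/3)) ^ (3:ℕ) = s₃ := by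
            rw [← Real.rpow_natCast (s₃ ^ ((1:ℝ)/3)) 3, ← Real.rpow_mul hs₃.le]
            norm_num
          rw [Fin.sum_univ_one, this]
          exact hs₃e
        · have : (s₃ ^ ((1:ℝ)/3)) ^ (5:ℕ) = s₃ ^ ((5:ℝ)/3) := by
            rw [← Real.rpow_natCast (s₃ ^ ((1:ℝ)/3)) 5, ← Real.rpow_mul hs₃.le]
            norm_num
          rw [Fin.sum_univ_one, this, ← heq]
          exact hs₅e
      · -- genuinely multi-soliton : IVT construction
        set ρ : ℝ := s₅ / s₃ ^ ((5:ℝ)/3) with hρdef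
        have hs₃p : (0:ℝ) < s₃ ^ ((5:ℝ)/3) := Real.rpow_pos_of_pos hs₃ _
        have hρ0 : 0 < ρ := div_pos hs₅ hs₃p
        have hρ1 : ρ < 1 := (div_lt_one hs₃p).mpr hlt
        obtain ⟨N, hNgt⟩ := exists_nat_gt (max 1 ((1/ρ) ^ ((3:ℝ)/2)))
        have hN1 : (1:ℝ) < N := lt_of_le_of_lt (le_max_left _ _) hNgt
        have hNpos : 0 < N := by
          have : (0:ℝ) < N := by linarith
          exact_mod_cast this
        have hNρ : (N:ℝ) ^ (-(2:ℝ)/3) < ρ := by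
          have h1 : (1/ρ) ^ ((3:ℝ)/2) < (N:ℝ) := lt_of_le_of_lt (le_max_right _ _) hNgt
          have h2 : ((1/ρ) ^ ((3:ℝ)/2)) ^ ((2:ℝ)/3) < (N:ℝ) ^ ((2:ℝ)/3) :=
            Real.rpow_lt_rpow (Real.rpow_nonneg (by positivity) _) h1 (by norm_num)
          rw [← Real.rpow_mul (by positivity)] at h2
          norm_num at h2
          have h3 : ρ⁻¹ < (N:ℝ) ^ ((2:ℝ)/3) := h2
          have h4 : (N:ℝ) ^ (-(2:ℝ)/3) = ((N:ℝ) ^ ((2:ℝ)/3))⁻¹ := by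
            rw [← Real.rpow_neg (by positivity)]; norm_num
          rw [h4]
          calc ((N:ℝ) ^ ((2:ℝ)/3))⁻¹ < (ρ⁻¹)⁻¹ := by
                apply inv_strictAnti₀ (by positivity) h3
            _ = ρ := inv_inv ρ
        set S3 : ℝ → ℝ := fun t => ∑ i : Fin N, t ^ (3 * (i:ℕ)) with hS3def
        set S5 : ℝ → ℝ := fun t => ∑ i : Fin N, t ^ (5 * (i:ℕ)) with hS5def
        have hz : (⟨0, hNpos⟩ : Fin N) ∈ Finset.univ := Finset.mem_univ _
        have hS3ge : ∀ t ∈ Set.Icc (0:ℝ) 1, 1 ≤ S3 t := by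
          intro t ht
          have := Finset.single_le_sum (f := fun i : Fin N => t ^ (3 * (i:ℕ)))
            (fun i _ => pow_nonneg ht.1 _) hz
          simpa using this
        have hS3c : Continuous S3 := by
          apply continuous_finset_sum; intro i _; exact continuous_pow _
        have hS5c : Continuous S5 := by
          apply continuous_finset_sum; intro i _; exact continuous_pow _
        set f : ℝ → ℝ := fun t => S5 t / (S3 t) ^ ((5:ℝ)/3) with hfdef
        have hfc : ContinuousOn f (Set.Icc 0 1) := by
          apply ContinuousOn.div hS5c.continuousOn
          · exact ContinuousOn.rpow_const hS3c.continuousOn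
              (fun t ht => Or.inr (by norm_num))
          · intro t ht
            have := hS3ge t ht
            positivity
        have hf0 : f 0 = 1 := by
          have h3 : S3 0 = 1 := by
            simp only [hS3def]
            rw [Finset.sum_eq_single (⟨0, hNpos⟩ : Fin N)]
            · norm_num
            · intro j _ hj
              have : (j:ℕ) ≠ 0 := by
                intro h; apply hj; exact Fin.ext h
              exact zero_pow (by omega)
            · intro h; exact absurd hz h
          have h5 : S5 0 = 1 := by
            simp only [hS5def]
            rw [Finset.sum_eq_single (⟨0, hNpos⟩ : Fin N)]
            · norm_num
            · intro j _ hj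
              have : (j:ℕ) ≠ 0 := by
                intro h; apply hj; exact Fin.ext h
              exact zero_pow (by omega)
            · intro h; exact absurd hz h
          rw [hfdef]; simp only [h3, h5, Real.one_rpow, div_one]
        have hf1 : f 1 = (N:ℝ) ^ (-(2:ℝ)/3) := by
          have h3 : S3 1 = N := by simp only [hS3def]; simp
          have h5 : S5 1 = N := by simp only [hS5def]; simp
          rw [hfdef]; simp only [h3, h5]
          have hN0 : (0:ℝ) < (N:ℝ) := by positivity
          rw [div_eq_iff (by positivity), ← Real.rpow_add hN0]
          norm_num
        -- IVT
        have hmem : ρ ∈ Set.Icc (f 1) (f 0) := by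
          rw [hf0, hf1]; exact ⟨hNρ.le, hρ1.le⟩
        obtain ⟨t, ht, hft⟩ := intermediate_value_Icc' (by norm_num : (0:ℝ) ≤ 1) hfc hmem
        have ht0 : 0 < t := by
          rcases lt_or_eq_of_le ht.1 with h | h
          · exact h
          · exfalso; rw [← h] at hft; rw [hf0] at hft; linarith [hft, hρ1]
        have ht1 : t < 1 := by
          rcases lt_or_eq_of_le ht.2 with h | h
          · exact h
          · exfalso; rw [h] at hft; rw [hf1] at hft; linarith [hft, hNρ]
        have hS3t : 1 ≤ S3 t := hS3ge t ht
        have hS3tpos : 0 < S3 t := by linarith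
        set lam : ℝ := (s₃ / S3 t) ^ ((1:ℝ)/3) with hlamdef
        have hlampos : 0 < lam := Real.rpow_pos_of_pos (by positivity) _
        have hlam3 : lam ^ (3:ℕ) = s₃ / S3 t := by
          rw [hlamdef, ← Real.rpow_natCast ((s₃ / S3 t) ^ ((1:ℝ)/3)) 3,
            ← Real.rpow_mul (by positivity)]
          norm_num
        have hlam5 : lam ^ (5:ℕ) = s₃ ^ ((5:ℝ)/3) / (S3 t) ^ ((5:ℝ)/3) := by
          rw [hlamdef, ← Real.rpow_natCast ((s₃ / S3 t) ^ ((1:ℝ)/3)) 5,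
            ← Real.rpow_mul (by positivity)]
          rw [Real.div_rpow hs₃.le hS3tpos.le]
          norm_num
        refine ⟨N, fun i => lam * t ^ (i:ℕ), ?_, ?_, ?_, ?_⟩
        · intro a b hab
          have : t ^ (b:ℕ) < t ^ (a:ℕ) :=
            pow_lt_pow_right_of_lt_one₀ ht0 ht1 hab
          exact mul_lt_mul_of_pos_left this hlampos
        · intro i; positivity
        · have hsum : ∑ m : Fin N, (lam * t ^ (m:ℕ)) ^ (3:ℕ) = lam ^ (3:ℕ) * S3 t := by
            rw [hS3def, Finset.mul_sum]
            apply Finset.sum_congr rfl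
            intro i _
            rw [mul_pow, ← pow_mul, mul_comm (i:ℕ) 3]
          rw [hsum, hlam3, div_mul_cancel₀ _ (ne_of_gt hS3tpos)]
          exact hs₃e
        · have hsum : ∑ m : Fin N, (lam * t ^ (m:ℕ)) ^ (5:ℕ) = lam ^ (5:ℕ) * S5 t := by
            rw [hS5def, Finset.mul_sum]
            apply Finset.sum_congr rfl
            intro i _
            rw [mul_pow, ← pow_mul, mul_comm (i:ℕ) 5]
          have hS3trp : (0:ℝ) < (S3 t) ^ ((5:ℝ)/3) := Real.rpow_pos_of_pos hS3tpos _
          have hS5eq : S5 t = ρ * (S3 t) ^ ((5:ℝ)/3) := by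
            rw [← hft]
            simp only [hfdef]
            rw [div_mul_cancel₀ _ (ne_of_gt hS3trp)]
          have hval : lam ^ (5:ℕ) * S5 t = s₅ := by
            rw [hlam5, hS5eq, hρdef]
            calc s₃ ^ ((5:ℝ)/3) / (S3 t) ^ ((5:ℝ)/3) *
                  (s₅ / s₃ ^ ((5:ℝ)/3) * (S3 t) ^ ((5:ℝ)/3))
                = s₅ * (s₃ ^ ((5:ℝ)/3) / s₃ ^ ((5:ℝ)/3)) *
                  ((S3 t) ^ ((5:ℝ)/3) / (S3 t) ^ ((5:ℝ)/3)) := by ring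
              _ = s₅ := by rw [div_self (ne_of_gt hs₃p), div_self (ne_of_gt hS3trp)]; ring
          rw [hsum, hval]
          exact hs₅e
end
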